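/- arXiv:2111.00249 — 2 statements merged into one kernel-verified Lean document; each statement's English description precedes it below -/
import Mathlib

section
/- For every pair of vertices i,j ∈ I, the one-variable elements E_i(z) := Σ_{d∈ℤ} z_{i1}^d z^{−d} of the big shuffle algebra 𝒱 satisfy, coefficientwise in z and w, the quadratic relation E_i(z)*E_j(w)·ζ̃_{ji}(w/z)·z^{δ_{ij}} = E_j(w)*E_i(z)·ζ̃_{ij}(z/w)·(−w)^{δ_{ij}}. Consequently, the assignment e_{i,d} ↦ z_{i1}^d (i ∈ I, d ∈ ℤ) induces an 𝔽-algebra homomorphism Υ̃ : Ũ⁺ → 𝒱 from the quadratic quantum loop group to the big shuffle algebra. -/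
noncomputable section
set_option linter.unusedSectionVars false
set_option maxHeartbeats 1000000
open scoped BigOperators
open DirectSum

namespace QShuffle

/-! ## Base field 𝔽 = ℚ(q, (t_e)_{e ∈ E}) -/

abbrev FF (E : Type) : Type := FractionRing (MvPolynomial (Option E) ℚ)

def qq (E : Type) : FF E := algebraMap (MvPolynomial (Option E) ℚ) (FF E) (MvPolynomial.X none)

def tt {E : Type} (e : E) : FF E := algebraMap (MvPolynomial (Option E) ℚ) (FF E) (MvPolynomial.X (some e))

variable {I E : Type} [Fintype I] [Fintype E] [DecidableEq I] [DecidableEq E]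
variable {F : Type} [Field F]

/-! ## Quiver combinatorics -/

def edges (src tgt : E → I) (i j : I) : Finset E :=
  Finset.univ.filter fun e => src e = i ∧ tgt e = j

/-- `#_{i→j}` -/
def nE (src tgt : E → I) (i j : I) : ℕ := (edges src tgt i j).card

/-- `#_{ij} = #_{i→j} + #_{j→i}` -/
def nnE (src tgt : E → I) (i j : I) : ℕ := nE src tgt i j + nE src tgt j i

/-- Kronecker delta -/
def dl (i j : I) : ℕ := if i = j then 1 else 0

/-- The double `Ē = E ⊔ E*`. -/
abbrev DEdge (E : Type) : Type := E ⊕ E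

def dsrc (src tgt : E → I) : DEdge E → I := Sum.elim src tgt
def dtgt (src tgt : E → I) : DEdge E → I := Sum.elim tgt src
/-- `t_e` for `e ∈ Ē`, with `t_{e*} = q/t_e`. -/
def dt (q : F) (t : E → F) : DEdge E → F := Sum.elim t fun e => q * (t e)⁻¹

open LaurentPolynomial in
/-- `ζ̃_{ij}(x) = (1-xq⁻¹)^{δ_{ij}} ∏_{e:i→j}(t_e⁻¹ - x) ∏_{e:j→i}(1 - t_e q⁻¹ x⁻¹)`. -/
def zetaT (src tgt : E → I) (q : F) (t : E → F) (i j : I) : LaurentPolynomial F :=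
  (if i = j then 1 - C q⁻¹ * T 1 else 1)
    * ∏ e ∈ edges src tgt i j, (C (t e)⁻¹ - T 1)
    * ∏ e ∈ edges src tgt j i, (1 - C (t e * q⁻¹) * T (-1))

/-! ## The quadratic quantum loop group Ũ⁺ -/

def gen (F : Type) [Field F] (I : Type) (i : I) (d : ℤ) : FreeAlgebra F (I × ℤ) :=
  FreeAlgebra.ι F (i, d)

/-- coefficient of `z^{-a} w^{-b}` in `e_i(z) e_j(w) ζ̃_{ji}(w/z) z^{δ_{ij}}` -/
def quadLHS (src tgt : E → I) (q : F) (t : E → F) (i j : I) (a b : ℤ) : FreeAlgebra F (I × ℤ) :=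
  Finsupp.sum (AddMonoidAlgebra.coeff (zetaT src tgt q t j i)) fun m c =>
    c • (gen F I i (a + (dl i j : ℤ) - m) * gen F I j (b + m))

/-- coefficient of `z^{-a} w^{-b}` in `e_j(w) e_i(z) ζ̃_{ij}(z/w) (-w)^{δ_{ij}}` -/
def quadRHS (src tgt : E → I) (q : F) (t : E → F) (i j : I) (a b : ℤ) : FreeAlgebra F (I × ℤ) :=
  ((-1 : F) ^ dl i j) •
    Finsupp.sum (AddMonoidAlgebra.coeff (zetaT src tgt q t i j)) fun m c =>
      c • (gen F I j (b + (dl i j : ℤ) - m) * gen F I i (a + m))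

/-- The quadratic relations. -/
inductive QuadRel (src tgt : E → I) (q : F) (t : E → F) :
    FreeAlgebra F (I × ℤ) → FreeAlgebra F (I × ℤ) → Prop
  | rel (i j : I) (a b : ℤ) :
      QuadRel src tgt q t (quadLHS src tgt q t i j a b) (quadRHS src tgt q t i j a b)

/-- The quadratic quantum loop group `Ũ⁺`. -/
abbrev Utilde (src tgt : E → I) (q : F) (t : E → F) : Type :=
  RingQuot (QuadRel src tgt q t)

/-- `e_{i,d} ∈ Ũ⁺` -/
def eU (src tgt : E → I) (q : F) (t : E → F) (i : I) (d : ℤ) : Utilde src tgt q t :=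
  RingQuot.mkAlgHom F (QuadRel src tgt q t) (gen F I i d)

/-! ## Words -/

abbrev Word (I : Type) : Type := List (I × ℤ)

/-- `e_w ∈ Ũ⁺` -/
def eW (src tgt : E → I) (q : F) (t : E → F) (w : Word I) : Utilde src tgt q t :=
  (w.map fun p => eU src tgt q t p.1 p.2).prod

/-- `e_w` in the free algebra -/
def eWFree (F : Type) [Field F] {I : Type} (w : Word I) : FreeAlgebra F (I × ℤ) :=
  (w.map fun p => gen F I p.1 p.2).prod

def colorCount (w : Word I) (i : I) : ℕ := (w.map Prod.fst).count i
def expSum (w : Word I) : ℤ := (w.map Prod.snd).sum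

/-- letter order: `i^{(d)} < j^{(e)}` iff `d > e` or (`d = e` and `i < j`) -/
def letterLT [LT I] (p r : I × ℤ) : Prop := r.2 < p.2 ∨ (p.2 = r.2 ∧ p.1 < r.1)

/-- lexicographic order on words -/
def wordLT [LT I] (w v : Word I) : Prop := List.Lex letterLT w v
def wordLE [LT I] (w v : Word I) : Prop := wordLT w v ∨ w = v

/-- A non-increasing word. -/
def NonInc (src tgt : E → I) [LinearOrder I] (w : Word I) : Prop :=
  ∀ a b : Fin w.length, a < b →
    (w.get a).2 < (w.get b).2 + ∑ s ∈ Finset.Ico a b, (nnE src tgt (w.get s).1 (w.get b).1 : ℤ)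
    ∨ ((w.get a).2 = (w.get b).2 + ∑ s ∈ Finset.Ico a b, (nnE src tgt (w.get s).1 (w.get b).1 : ℤ)
        ∧ (w.get b).1 ≤ (w.get a).1)

/-! ## The big shuffle algebra: graded pieces -/

abbrev VarType {I : Type} (ν : I → ℕ) : Type := Σ i : I, Fin (ν i)

abbrev Laur (F : Type) [Field F] {I : Type} (ν : I → ℕ) : Type :=
  AddMonoidAlgebra F (VarType ν →₀ ℤ)

def rnm {ν : I → ℕ} (g : VarType ν ≃ VarType ν) (R : Laur F ν) : Laur F ν :=
  AddMonoidAlgebra.mapDomain (Finsupp.equivMapDomain g) R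

def ColorPres {ν : I → ℕ} (g : VarType ν ≃ VarType ν) : Prop := ∀ x : VarType ν, (g x).1 = x.1

def IsSym {ν : I → ℕ} (R : Laur F ν) : Prop :=
  ∀ g : VarType ν ≃ VarType ν, ColorPres g → rnm g R = R

def SymSub (F : Type) [Field F] {I : Type} (ν : I → ℕ) : Submodule F (Laur F ν) where
  carrier := {R | IsSym R}
  add_mem' := by
    intro R S hR hS g hg
    have h1 := hR g hg
    have h2 := hS g hg
    unfold rnm at *
    rw [AddMonoidAlgebra.mapDomain_add, h1, h2]
  zero_mem' := by
    intro g hg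
    simp [rnm, AddMonoidAlgebra.mapDomain_zero]
  smul_mem' := by
    intro c R hR g hg
    have h1 := hR g hg
    unfold rnm at *
    unfold AddMonoidAlgebra.mapDomain at *
    conv_rhs => rw [← h1]
    show AddMonoidAlgebra.ofCoeff (Finsupp.mapDomain _ (c • AddMonoidAlgebra.coeff R)) =
      AddMonoidAlgebra.ofCoeff (c • Finsupp.mapDomain _ (AddMonoidAlgebra.coeff R))
    rw [Finsupp.mapDomain_smul]

/-- The big shuffle algebra `𝒱` as a graded vector space. -/
abbrev VV (F : Type) [Field F] (I : Type) [Fintype I] [DecidableEq I] : Type :=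
  ⨁ ν : I → ℕ, SymSub F ν

def inclV {F : Type} [Field F] {I : Type} [Fintype I] [DecidableEq I] (ν : I → ℕ) :
    SymSub F (I := I) ν →ₗ[F] VV F I :=
  DirectSum.lof F (I → ℕ) (fun ν => SymSub F ν) ν

def sgm (i : I) : I → ℕ := fun j => if j = i then 1 else 0

def oneVarM (F : Type) [Field F] {I : Type} [DecidableEq I] (i : I) (d : ℤ) :
    Laur F (sgm i) :=
  AddMonoidAlgebra.single (Finsupp.single ⟨i, ⟨0, by simp [sgm]⟩⟩ d) 1

lemma varSubsingleton {i : I} (x y : VarType (sgm i)) : x = y := by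
  obtain ⟨a, fa⟩ := x
  obtain ⟨b, fb⟩ := y
  have ha : a = i := by
    by_contra h
    have h0 : sgm i a = 0 := by simp [sgm, h]
    have := fa.isLt
    omega
  have hb : b = i := by
    by_contra h
    have h0 : sgm i b = 0 := by simp [sgm, h]
    have := fb.isLt
    omega
  subst ha
  subst hb
  have h1 : sgm b b = 1 := by simp [sgm]
  have hfa := fa.isLt
  have hfb := fb.isLt
  congr 1
  exact Fin.ext (by omega)

lemma oneVarM_sym (i : I) (d : ℤ) : IsSym (oneVarM F i d) := by
  intro g hg
  have hgid : g = Equiv.refl _ := Equiv.ext fun x => varSubsingleton _ _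
  subst hgid
  unfold rnm
  have hid : (Finsupp.equivMapDomain (Equiv.refl (VarType (sgm i))) :
      (VarType (sgm i) →₀ ℤ) → (VarType (sgm i) →₀ ℤ)) = id :=
    funext fun l => Finsupp.equivMapDomain_refl l
  rw [hid]
  unfold AddMonoidAlgebra.mapDomain
  rw [Finsupp.mapDomain_id]

/-- `z_{i1}^d` -/
def oneVar (F : Type) [Field F] {I : Type} [Fintype I] [DecidableEq I] (i : I) (d : ℤ) :
    SymSub F (sgm i) :=
  ⟨oneVarM F i d, oneVarM_sym i d⟩

lemma one_sym {ν : I → ℕ} : IsSym (AddMonoidAlgebra.single (0 : VarType ν →₀ ℤ) (1 : F)) := by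
  intro g hg
  unfold rnm
  rw [AddMonoidAlgebra.mapDomain_single]
  simp

instance {ν : I → ℕ} : DecidablePred (fun g : VarType ν ≃ VarType ν => ColorPres g) := fun g =>
  decidable_of_iff (∀ x : VarType ν, (g x).1 = x.1) Iff.rfl

/-! ## Specialization and wheel conditions -/

def specialize {ν : I → ℕ} (ρ : VarType ν → VarType ν) (sc : VarType ν → F) (R : Laur F ν) :
    Laur F ν :=
  Finsupp.sum (AddMonoidAlgebra.coeff R) fun m a =>
    AddMonoidAlgebra.single (Finsupp.mapDomain ρ m) (a * ∏ v ∈ m.support, sc v ^ (m v))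

/-- The 3-variable wheel conditions. -/
def WheelCond (src tgt : E → I) (q : F) (t : E → F) {ν : I → ℕ} (R : Laur F ν) : Prop :=
  ∀ (eb : DEdge E) (va vb vc : VarType ν),
    va.1 = dsrc src tgt eb → vb.1 = dtgt src tgt eb → vc.1 = dsrc src tgt eb →
    va ≠ vc → vb ≠ va → vb ≠ vc →
    specialize
      (fun v => if v = va then vc else if v = vb then vc else v)
      (fun v => if v = va then q else if v = vb then dt q t eb else 1) R = 0

/-! ## The shuffle product, characterized by a polynomial identity -/

/-- the variable `z_v` as a Laurent polynomial -/
def XV {ν : I → ℕ} (v : VarType ν) : Laur F ν :=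
  AddMonoidAlgebra.single (Finsupp.single v 1) 1

/-- substitute the monomial with exponent vector `u` into a one-variable Laurent polynomial -/
def compL {ν : I → ℕ} (l : LaurentPolynomial F) (u : VarType ν →₀ ℤ) : Laur F ν :=
  Finsupp.sum (AddMonoidAlgebra.coeff l) fun m a => AddMonoidAlgebra.single (m • u) a

/-- the exponent vector of `z_x / z_y` -/
def ratio {ν : I → ℕ} (x y : VarType ν) : VarType ν →₀ ℤ :=
  Finsupp.single x 1 - Finsupp.single y 1

/-- `∏_{(u,v) distinct, same color} (z_u - z_v)`, a symmetric Laurent polynomial used to clear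
the denominators in the symmetrized shuffle product. -/
def Dsym (F : Type) [Field F] {I : Type} [Fintype I] [DecidableEq I] (ν : I → ℕ) : Laur F ν :=
  ∏ p ∈ (Finset.univ : Finset (VarType ν × VarType ν)).filter
      (fun p => p.1 ≠ p.2 ∧ p.1.1 = p.2.1),
    (XV p.1 - XV p.2)

def incl1 (ν ν' : I → ℕ) (x : VarType ν) : VarType (ν + ν') :=
  ⟨x.1, Fin.castAdd (ν' x.1) x.2⟩

def incl2 (ν ν' : I → ℕ) (y : VarType ν') : VarType (ν + ν') :=
  ⟨y.1, Fin.natAdd (ν y.1) y.2⟩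

def embed1 (ν ν' : I → ℕ) (R : Laur F ν) : Laur F (ν + ν') :=
  AddMonoidAlgebra.mapDomain (fun m => Finsupp.mapDomain (incl1 ν ν') m) R

def embed2 (ν ν' : I → ℕ) (R : Laur F ν') : Laur F (ν + ν') :=
  AddMonoidAlgebra.mapDomain (fun m => Finsupp.mapDomain (incl2 ν ν') m) R

/-- `Dsym · ∏_{x ∈ vars(ν), y ∈ vars(ν')} ζ_{color x, color y}(z_x / z_y)`, with all
denominators cancelled: the kernel of the shuffle product after clearing denominators. -/
def Kpoly (src tgt : E → I) (q : F) (t : E → F) (ν ν' : I → ℕ) : Laur F (ν + ν') :=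
  (∏ p ∈ (Finset.univ : Finset (VarType ν × VarType ν')),
    (compL (zetaT src tgt q t p.1.1 p.2.1) (ratio (incl1 ν ν' p.1) (incl2 ν ν' p.2))
      * (if p.1.1 = p.2.1 then
          (XV (incl1 ν ν' p.1) - XV (incl2 ν ν' p.2)) * XV (incl2 ν ν' p.2) else 1)))
  * (∏ p ∈ (Finset.univ : Finset (VarType ν × VarType ν)).filter
        (fun p => p.1 ≠ p.2 ∧ p.1.1 = p.2.1),
      (XV (incl1 ν ν' p.1) - XV (incl1 ν ν' p.2)))
  * (∏ p ∈ (Finset.univ : Finset (VarType ν' × VarType ν')).filter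
        (fun p => p.1 ≠ p.2 ∧ p.1.1 = p.2.1),
      (XV (incl2 ν ν' p.1) - XV (incl2 ν ν' p.2)))

/-- The defining identity of the shuffle product `R * R' = P`, with denominators cleared:
`∏_i ν_i! ν'_i! • (Dsym · P) = ∑_{color-preserving g} g ( R ⊗ R' · Kpoly )`. -/
def ShuffleEq (src tgt : E → I) (q : F) (t : E → F) {ν ν' : I → ℕ}
    (R : Laur F ν) (R' : Laur F ν') (P : Laur F (ν + ν')) : Prop :=
  ((∏ i : I, Nat.factorial (ν i) * Nat.factorial (ν' i) : ℕ) : F) • (Dsym F (ν + ν') * P) =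
    ∑ g : {g : Equiv.Perm (VarType (ν + ν')) // ColorPres g},
      rnm g.val (embed1 ν ν' R * embed2 ν ν' R' * Kpoly src tgt q t ν ν')

/-- `(V, ι)` is a model of the big shuffle algebra `𝒱`: an `F`-algebra whose product is
the shuffle product. -/
def IsShuffleAlgebra (src tgt : E → I) (q : F) (t : E → F) (V : Type) [Ring V] [Algebra F V]
    (ι : VV F I ≃ₗ[F] V) : Prop :=
  (ι (inclV 0 ⟨AddMonoidAlgebra.single 0 1, one_sym⟩) = 1) ∧
  ∀ (ν ν' : I → ℕ) (R : SymSub F ν) (R' : SymSub F ν') (P : SymSub F (ν + ν')),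
    ShuffleEq src tgt q t R.val R'.val P.val →
    ι (inclV ν R) * ι (inclV ν' R') = ι (inclV (ν + ν') P)

end QShuffle

namespace QShuffle

variable {I E : Type} [Fintype I] [Fintype E] [DecidableEq I] [DecidableEq E]
variable {F : Type} [Field F]

/-! ## The pairing, via expansion in a Hahn series field

The "expansion in the region `|z_1| ≫ ⋯ ≫ |z_n|`" of a rational function is encoded by
working inside the field of Hahn series over the lexicographic group `Lex (Fin n →₀ ℤ)`
(a Laurent monomial `∏ z_a^{v_a}` is placed in degree `toLex (-v)`, so that each ratio
`z_b/z_a` with `a < b` has positive order, and taking inverses in this field implements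
exactly the geometric series expansions in these ratios). -/

abbrev HF (F : Type) [Field F] (n : ℕ) : Type := HahnSeries (Lex (Fin n →₀ ℤ)) F

/-- the monomial `z_1^{v 1} ⋯ z_n^{v n}` in the Hahn field -/
def monoH {n : ℕ} (v : Fin n → ℤ) : HF F n :=
  HahnSeries.single (toLex (Finsupp.equivFunOnFinite.symm fun a => - v a)) (1 : F)

/-- a Laurent polynomial in the Hahn field -/
def embedH {n : ℕ} (S : AddMonoidAlgebra F (Fin n →₀ ℤ)) : HF F n :=
  Finsupp.sum (AddMonoidAlgebra.coeff S) fun m a => HahnSeries.single (toLex (-m)) a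

/-- the Hahn degree of the ratio `z_b/z_a` -/
def rexp {n : ℕ} (a b : Fin n) : Fin n →₀ ℤ :=
  Finsupp.single a 1 - Finsupp.single b 1

/-- the expansion of `ζ_{c_b, c_a}(z_b/z_a)` in the Hahn field (for `a < b`) -/
def zetaH (src tgt : E → I) (q : F) (t : E → F) {n : ℕ} (c : Fin n → I) (a b : Fin n) :
    HF F n :=
  (Finsupp.sum (AddMonoidAlgebra.coeff (zetaT src tgt q t (c b) (c a))) fun m x =>
      HahnSeries.single (toLex (m • rexp a b)) x)
    * ((1 - HahnSeries.single (toLex (rexp a b)) (1 : F))⁻¹) ^ dl (c b) (c a)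

/-- `⟨e_{c_1,d_1} ⋯ e_{c_n,d_n}, S⟩` for a Laurent polynomial `S` in the variables
`z_1, …, z_n`: the constant term of `z^d · S · ∏_{a<b} ζ_{c_b c_a}(z_b/z_a)⁻¹`,
expanded in the region `|z_1| ≫ ⋯ ≫ |z_n|`. -/
def pairCore (src tgt : E → I) (q : F) (t : E → F) {n : ℕ} (c : Fin n → I) (d : Fin n → ℤ)
    (S : AddMonoidAlgebra F (Fin n →₀ ℤ)) : F :=
  (embedH S * monoH d *
      ∏ p ∈ (Finset.univ : Finset (Fin n × Fin n)).filter (fun p : Fin n × Fin n => p.1 < p.2),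
        (zetaH src tgt q t c p.1 p.2)⁻¹).coeff 0

/-- substitution `z_a ↦ z_{β a}` at the level of exponents -/
def pullback {ν : I → ℕ} (n : ℕ) (β : Fin n ≃ VarType ν) (R : Laur F ν) :
    AddMonoidAlgebra F (Fin n →₀ ℤ) :=
  AddMonoidAlgebra.mapDomain (fun m : VarType ν →₀ ℤ => Finsupp.equivMapDomain β.symm m) R

/-- The pairing `⟨e_w , R⟩` of a word with a symmetric Laurent polynomial (`0` if the
degrees do not match; the choice of the color-compatible bijection `β` is immaterial
when `R` is symmetric). -/
def pairWord (src tgt : E → I) (q : F) (t : E → F) (l : Word I) {ν : I → ℕ} (R : Laur F ν) :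
    F :=
  if h : ∃ β : Fin l.length ≃ VarType ν, ∀ a, (β a).1 = (l.get a).1 then
    pairCore src tgt q t (fun a => (l.get a).1) (fun a => (l.get a).2)
      (pullback l.length h.choose R)
  else 0

/-- The pairing of an arbitrary element of the free algebra with `R`, extended linearly
from words. -/
def pairFree (src tgt : E → I) (q : F) (t : E → F) (x : FreeAlgebra F (I × ℤ)) {ν : I → ℕ}
    (R : Laur F ν) : F :=
  Finsupp.sum
    (MonoidAlgebra.coeff ((FreeAlgebra.equivMonoidAlgebraFreeMonoid : FreeAlgebra F (I × ℤ) ≃ₐ[F]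
        MonoidAlgebra F (FreeMonoid (I × ℤ))) x))
    fun w cf => cf * pairWord src tgt q t (FreeMonoid.toList w) R

end QShuffle

namespace QShuffle

variable {I E : Type} [Fintype I] [Fintype E] [DecidableEq I] [DecidableEq E]
variable {F : Type} [Field F]

/-! ## The cubic elements `A^{(e)}_{a,b,c}`

We work with Laurent polynomials in the three variables `x₁ = z 0, x₂ = z 1, y = z 2`.
The rational prefactors appearing in `X^{(e)}` are Laurent polynomials after the
cancellations indicated in the paper; we define them in cancelled form. -/

abbrev L3 (F : Type) [Field F] : Type := AddMonoidAlgebra F (Fin 3 →₀ ℤ)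

/-- substitute the monomial with exponent vector `u` into a 1-variable Laurent polynomial -/
def comp3 (l : LaurentPolynomial F) (u : Fin 3 →₀ ℤ) : L3 F :=
  Finsupp.sum (AddMonoidAlgebra.coeff l) fun m a => AddMonoidAlgebra.single (m • u) a

/-- exponent vector of `z_b / z_a` -/
def uru (a b : Fin 3) : Fin 3 →₀ ℤ := Finsupp.single b 1 - Finsupp.single a 1

open LaurentPolynomial in
/-- `ζ̃_{ij}(x)` without its `(1 - x q⁻¹)^{δ_{ij}}` factor, i.e.
`ζ̃_{ii}(x)/(1 - x q⁻¹)` when `i = j`. -/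
def zetaNoQ (src tgt : E → I) (q : F) (t : E → F) (i j : I) : LaurentPolynomial F :=
  (∏ e ∈ edges src tgt i j, (C (t e)⁻¹ - T 1))
    * ∏ e ∈ edges src tgt j i, (1 - C (t e * q⁻¹) * T (-1))

open LaurentPolynomial in
/-- For an edge `e : i → j` of `Ē`, the Laurent polynomial `ζ̃_{ji}(x) / (1 - x q / t_e)`
(the displayed factor cancels a linear factor of `ζ̃_{ji}`). -/
def cancelA (src tgt : E → I) (q : F) (t : E → F) : DEdge E → LaurentPolynomial F
  | Sum.inl f =>
      (if tgt f = src f then 1 - C q⁻¹ * T 1 else 1)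
        * (∏ e' ∈ edges src tgt (tgt f) (src f), (C (t e')⁻¹ - T 1))
        * (∏ e' ∈ (edges src tgt (src f) (tgt f)).erase f, (1 - C (t e' * q⁻¹) * T (-1)))
        * (C (- (t f) * q⁻¹) * T (-1))
  | Sum.inr f =>
      (if src f = tgt f then 1 - C q⁻¹ * T 1 else 1)
        * (∏ e' ∈ (edges src tgt (src f) (tgt f)).erase f, (C (t e')⁻¹ - T 1))
        * (∏ e' ∈ edges src tgt (tgt f) (src f), (1 - C (t e' * q⁻¹) * T (-1)))
        * C (t f)⁻¹

open LaurentPolynomial in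
/-- For an edge `e : i → j` of `Ē`, the Laurent polynomial `ζ̃_{ij}(x) / (1 - x t_e)`. -/
def cancelB (src tgt : E → I) (q : F) (t : E → F) : DEdge E → LaurentPolynomial F
  | Sum.inl f =>
      (if src f = tgt f then 1 - C q⁻¹ * T 1 else 1)
        * (∏ e' ∈ (edges src tgt (src f) (tgt f)).erase f, (C (t e')⁻¹ - T 1))
        * (∏ e' ∈ edges src tgt (tgt f) (src f), (1 - C (t e' * q⁻¹) * T (-1)))
        * C (t f)⁻¹
  | Sum.inr f =>
      (if tgt f = src f then 1 - C q⁻¹ * T 1 else 1)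
        * (∏ e' ∈ edges src tgt (tgt f) (src f), (C (t e')⁻¹ - T 1))
        * (∏ e' ∈ (edges src tgt (src f) (tgt f)).erase f, (1 - C (t e' * q⁻¹) * T (-1)))
        * (C (- (t f) * q⁻¹) * T (-1))

/-- a Laurent monomial in `x₁, x₂, y` -/
def mono3 (a b c : ℤ) (cf : F) : L3 F :=
  AddMonoidAlgebra.single (Finsupp.equivFunOnFinite.symm ![a, b, c]) cf

variable (src tgt : E → I) (q : F) (t : E → F) in
/-- the Laurent-polynomial prefactor of `e_i(x₁)e_i(x₂)e_j(y)` in `X^{(e)}` -/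
def pref1 (e : DEdge E) : L3 F :=
  comp3 (zetaNoQ src tgt q t (dsrc src tgt e) (dsrc src tgt e)) (uru 0 1)
    * comp3 (zetaT src tgt q t (dtgt src tgt e) (dsrc src tgt e)) (uru 0 2)
    * comp3 (cancelA src tgt q t e) (uru 1 2)

variable (src tgt : E → I) (q : F) (t : E → F) in
/-- the Laurent-polynomial prefactor of `e_i(x₂)e_j(y)e_i(x₁)` in `X^{(e)}` -/
def pref2 (e : DEdge E) : L3 F :=
  comp3 (zetaT src tgt q t (dsrc src tgt e) (dsrc src tgt e)) (uru 1 0)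
    * comp3 (cancelA src tgt q t e) (uru 1 2)
    * comp3 (cancelB src tgt q t e) (uru 2 0)
    * mono3 0 1 (-1) (- dt q t e)
    * (mono3 (-1) 0 1 (-1 : F)) ^ dl (dsrc src tgt e) (dtgt src tgt e)

variable (src tgt : E → I) (q : F) (t : E → F) in
/-- the Laurent-polynomial prefactor of `e_j(y)e_i(x₁)e_i(x₂)` in `X^{(e)}` -/
def pref3 (e : DEdge E) : L3 F :=
  comp3 (zetaNoQ src tgt q t (dsrc src tgt e) (dsrc src tgt e)) (uru 0 1)
    * comp3 (cancelB src tgt q t e) (uru 2 0)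
    * comp3 (zetaT src tgt q t (dsrc src tgt e) (dtgt src tgt e)) (uru 2 1)
    * mono3 0 1 (-1) (dt q t e * q⁻¹)
    * (mono3 (-1) (-1) 2 (1 : F)) ^ dl (dsrc src tgt e) (dtgt src tgt e)

variable (q : F) (t : E → F) in
/-- the monomial shift `x₁^a (x₂/q)^b (y/t_e)^c` -/
def shift3 (e : DEdge E) (a b c : ℤ) : L3 F :=
  mono3 a b c (q ^ (-b) * (dt q t e) ^ (-c))

variable (src tgt : E → I) (q : F) (t : E → F) in
/-- The cubic element `A^{(e)}_{a,b,c}`, as an element of the free algebra: the constant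
term of `x₁^a (x₂/q)^b (y/t_e)^c / ((1-q)(1-t_e)^{δ_{ij}}(1-t_e/q)^{δ_{ij}}) ⬝ X^{(e)}`. -/
def Afree (e : DEdge E) (a b c : ℤ) : FreeAlgebra F (I × ℤ) :=
  ((1 - q)⁻¹ * ((1 - dt q t e) ^ dl (dsrc src tgt e) (dtgt src tgt e))⁻¹
      * ((1 - dt q t e * q⁻¹) ^ dl (dsrc src tgt e) (dtgt src tgt e))⁻¹) •
  (Finsupp.sum (AddMonoidAlgebra.coeff (shift3 q t e a b c * pref1 src tgt q t e)) (fun m cf =>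
      cf • (gen F I (dsrc src tgt e) (m 0) * gen F I (dsrc src tgt e) (m 1)
        * gen F I (dtgt src tgt e) (m 2)))
    + Finsupp.sum (AddMonoidAlgebra.coeff (shift3 q t e a b c * pref2 src tgt q t e)) (fun m cf =>
      cf • (gen F I (dsrc src tgt e) (m 1) * gen F I (dtgt src tgt e) (m 2)
        * gen F I (dsrc src tgt e) (m 0)))
    + Finsupp.sum (AddMonoidAlgebra.coeff (shift3 q t e a b c * pref3 src tgt q t e)) (fun m cf =>
      cf • (gen F I (dtgt src tgt e) (m 2) * gen F I (dsrc src tgt e) (m 0)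
        * gen F I (dsrc src tgt e) (m 1))))

/-- The relations defining the quantum loop group `U⁺ = Ũ⁺/J`: the quadratic relations
together with the vanishing of all the cubic elements. -/
inductive FullRel (src tgt : E → I) (q : F) (t : E → F) :
    FreeAlgebra F (I × ℤ) → FreeAlgebra F (I × ℤ) → Prop
  | quad {x y : FreeAlgebra F (I × ℤ)} : QuadRel src tgt q t x y → FullRel src tgt q t x y
  | cubic (e : DEdge E) (a b c : ℤ) : FullRel src tgt q t (Afree src tgt q t e a b c) 0

/-- The quantum loop group `U⁺ = Ũ⁺ / J`. -/
abbrev Uplus (src tgt : E → I) (q : F) (t : E → F) : Type :=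
  RingQuot (FullRel src tgt q t)

/-- `e_{i,d} ∈ U⁺` -/
def eUp (src tgt : E → I) (q : F) (t : E → F) (i : I) (d : ℤ) : Uplus src tgt q t :=
  RingQuot.mkAlgHom F (FullRel src tgt q t) (gen F I i d)

/-- the canonical projection `Ũ⁺ → U⁺` -/
def projU (src tgt : E → I) (q : F) (t : E → F) :
    Utilde src tgt q t →ₐ[F] Uplus src tgt q t :=
  RingQuot.liftAlgHom F ⟨RingQuot.mkAlgHom F (FullRel src tgt q t),
    fun _ _ hxy => RingQuot.mkAlgHom_rel F (FullRel.quad hxy)⟩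

/-- `J ⊆ Ũ⁺`: the two-sided ideal generated by the cubic elements, realized as the kernel
of the projection `Ũ⁺ → U⁺ = Ũ⁺/J`. -/
def Jset (src tgt : E → I) (q : F) (t : E → F) : Set (Utilde src tgt q t) :=
  {u | projU src tgt q t u = 0}

/-! ## Leading words -/

def totalDeg {I : Type} [Fintype I] (ν : I → ℕ) : ℕ := ∑ i, ν i

/-- The word associated to the monomial `∏ z_v^{m v}` and the ordering `σ` of its
variables: the `a`-th letter is `(σ a).1` with exponent
`d_a = k_a + ∑_{t>a} #_{i_a → i_t} - ∑_{s<a} #_{i_s → i_a}` where `k_a = -m (σ a)`. -/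
def assocWord (src tgt : E → I) {ν : I → ℕ} (m : VarType ν →₀ ℤ)
    (σ : Fin (totalDeg ν) ≃ VarType ν) : Word I :=
  List.ofFn fun a : Fin (totalDeg ν) =>
    ((σ a).1,
      - m (σ a)
        + ∑ t' ∈ Finset.univ.filter (fun t' : Fin (totalDeg ν) => a < t'),
            (nE src tgt (σ a).1 (σ t').1 : ℤ)
        - ∑ s ∈ Finset.univ.filter (fun s : Fin (totalDeg ν) => s < a),
            (nE src tgt (σ s).1 (σ a).1 : ℤ))

/-- `w` is the leading word of the monomial `m`: the lexicographically largest among the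
words associated to the orderings of its variables. -/
def IsLeadOfMono (src tgt : E → I) [LinearOrder I] {ν : I → ℕ} (m : VarType ν →₀ ℤ)
    (w : Word I) : Prop :=
  (∃ σ, w = assocWord src tgt m σ) ∧ ∀ σ, wordLE (assocWord src tgt m σ) w

/-- `w` is the leading word of `0 ≠ R ∈ 𝒱`: the largest of the leading words of the
monomials appearing in `R`. -/
def IsLead (src tgt : E → I) [LinearOrder I] {ν : I → ℕ} (R : Laur F ν) (w : Word I) : Prop :=
  (∃ m ∈ (AddMonoidAlgebra.coeff R).support, IsLeadOfMono src tgt m w) ∧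
    ∀ m ∈ (AddMonoidAlgebra.coeff R).support, ∀ σ, wordLE (assocWord src tgt m σ) w

end QShuffle

namespace QShuffle

variable {I E : Type} [Fintype I] [Fintype E] [DecidableEq I] [DecidableEq E]
variable {F : Type} [Field F]

/-! ### Toolkit: ring-hom structure of `rnm` and `compL`, monomial calculus -/

section Toolkit

variable {ν : I → ℕ}

def expHom (u : VarType ν →₀ ℤ) : ℤ →+ (VarType ν →₀ ℤ) where
  toFun m := m • u
  map_zero' := zero_smul _ _
  map_add' a b := add_smul a b u

lemma compL_eq' (l : LaurentPolynomial F) (u : VarType ν →₀ ℤ) :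
    compL l u = AddMonoidAlgebra.mapDomain (fun m : ℤ => m • u) l := by
  apply AddMonoidAlgebra.ext
  simp only [compL, AddMonoidAlgebra.coeff_finsuppSum, AddMonoidAlgebra.coeff_single,
    AddMonoidAlgebra.coeff_mapDomain]
  rfl

lemma compL_eq (l : LaurentPolynomial F) (u : VarType ν →₀ ℤ) :
    compL l u = AddMonoidAlgebra.mapDomainRingHom F (expHom u) l := by
  rw [compL_eq']; rfl

def rnmHom (g : VarType ν ≃ VarType ν) : Laur F ν →+* Laur F ν :=
  AddMonoidAlgebra.mapDomainRingHom F
    (Finsupp.mapDomain.addMonoidHom (M := ℤ) (⇑g))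

lemma rnm_eq (g : VarType ν ≃ VarType ν) (R : Laur F ν) : rnm g R = rnmHom g R := by
  unfold rnm rnmHom
  have h : (Finsupp.equivMapDomain g : (VarType ν →₀ ℤ) → (VarType ν →₀ ℤ))
      = Finsupp.mapDomain (⇑g) := funext fun l => Finsupp.equivMapDomain_eq_mapDomain g l
  rw [h]; rfl

lemma rnm_mul (g : VarType ν ≃ VarType ν) (R S : Laur F ν) :
    rnm g (R * S) = rnm g R * rnm g S := by
  rw [rnm_eq, rnm_eq, rnm_eq, map_mul]

lemma rnm_smul (g : VarType ν ≃ VarType ν) (c : F) (R : Laur F ν) :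
    rnm g (c • R) = c • rnm g R := by
  unfold rnm; apply AddMonoidAlgebra.ext; simp [Finsupp.mapDomain_smul]

lemma rnm_sub (g : VarType ν ≃ VarType ν) (R S : Laur F ν) :
    rnm g (R - S) = rnm g R - rnm g S := by
  rw [rnm_eq, rnm_eq, rnm_eq, map_sub]

lemma rnm_single (g : VarType ν ≃ VarType ν) (m : VarType ν →₀ ℤ) (c : F) :
    rnm g (AddMonoidAlgebra.single m c)
      = AddMonoidAlgebra.single (Finsupp.equivMapDomain g m) c := by
  unfold rnm; exact AddMonoidAlgebra.mapDomain_single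

lemma rnm_refl (R : Laur F ν) : rnm (Equiv.refl (VarType ν)) R = R := by
  unfold rnm
  have hid : (Finsupp.equivMapDomain (Equiv.refl (VarType ν)) :
      (VarType ν →₀ ℤ) → (VarType ν →₀ ℤ)) = id :=
    funext fun l => Finsupp.equivMapDomain_refl l
  rw [hid]
  unfold AddMonoidAlgebra.mapDomain
  rw [Finsupp.mapDomain_id]

lemma rnm_finsupp_sum {α M : Type} [Zero M] (g : VarType ν ≃ VarType ν) (Z : α →₀ M)
    (f : α → M → Laur F ν) :
    rnm g (Finsupp.sum Z f) = Finsupp.sum Z (fun a m => rnm g (f a m)) := by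
  rw [rnm_eq, map_finsuppSum]
  exact Finsupp.sum_congr fun a _ => (rnm_eq g _).symm

lemma equivMapDomain_smul (g : VarType ν ≃ VarType ν) (m : ℤ) (u : VarType ν →₀ ℤ) :
    Finsupp.equivMapDomain g (m • u) = m • Finsupp.equivMapDomain g u := by
  ext a; simp [Finsupp.equivMapDomain_apply]

lemma rnm_compL (g : VarType ν ≃ VarType ν) (l : LaurentPolynomial F) (u : VarType ν →₀ ℤ) :
    rnm g (compL l u) = compL l (Finsupp.equivMapDomain g u) := by
  unfold rnm
  rw [compL_eq', compL_eq']
  apply AddMonoidAlgebra.ext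
  simp only [AddMonoidAlgebra.coeff_mapDomain]
  rw [← Finsupp.mapDomain_comp]
  congr 1
  funext m
  show Finsupp.equivMapDomain g (m • u) = m • Finsupp.equivMapDomain g u
  exact equivMapDomain_smul g m u

/-- two-variable Laurent monomial -/
def MM (x y : VarType ν) (u v : ℤ) : Laur F ν :=
  AddMonoidAlgebra.single (Finsupp.single x u + Finsupp.single y v) (1 : F)

lemma MM_mul (x y : VarType ν) (u v u' v' : ℤ) :
    (MM x y u v : Laur F ν) * MM x y u' v' = MM x y (u + u') (v + v') := by
  unfold MM
  rw [AddMonoidAlgebra.single_mul_single, one_mul]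
  congr 1
  rw [Finsupp.single_add, Finsupp.single_add]
  abel

lemma MM_comm (x y : VarType ν) (u v : ℤ) : (MM x y u v : Laur F ν) = MM y x v u := by
  unfold MM; rw [add_comm]

lemma MM_single_left (x y : VarType ν) (u : ℤ) :
    (MM x y u 0 : Laur F ν) = AddMonoidAlgebra.single (Finsupp.single x u) 1 := by
  unfold MM; rw [Finsupp.single_zero, add_zero]

lemma XV_eq_MM (x y : VarType ν) : (XV x : Laur F ν) = MM x y 1 0 := by
  unfold XV; rw [MM_single_left]

lemma XV_eq_MM' (x y : VarType ν) : (XV y : Laur F ν) = MM x y 0 1 := by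
  unfold XV MM; rw [Finsupp.single_zero, zero_add]

lemma smul_ratio (x y : VarType ν) (m : ℤ) :
    m • ratio x y = Finsupp.single x m + Finsupp.single y (-m) := by
  unfold ratio
  rw [smul_sub, sub_eq_add_neg, Finsupp.smul_single, Finsupp.smul_single, ← Finsupp.single_neg]
  simp

lemma MM_mul_compL (x y : VarType ν) (u v : ℤ) (l : LaurentPolynomial F) :
    (MM x y u v : Laur F ν) * compL l (ratio x y)
      = Finsupp.sum (AddMonoidAlgebra.coeff l) fun m c => c • MM x y (u + m) (v - m) := by
  unfold compL
  rw [Finsupp.mul_sum]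
  refine Finsupp.sum_congr fun m _ => ?_
  show (MM x y u v : Laur F ν) * AddMonoidAlgebra.single (m • ratio x y) (l.coeff m) = _
  unfold MM
  rw [AddMonoidAlgebra.single_mul_single, one_mul, AddMonoidAlgebra.smul_single', mul_one]
  congr 1
  rw [smul_ratio, Finsupp.single_add, sub_eq_add_neg, Finsupp.single_add]
  abel

lemma MM_mul_compL' (x y : VarType ν) (u v : ℤ) (l : LaurentPolynomial F) :
    (MM x y u v : Laur F ν) * compL l (ratio y x)
      = Finsupp.sum (AddMonoidAlgebra.coeff l) fun m c => c • MM x y (u - m) (v + m) := by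
  rw [MM_comm, MM_mul_compL]
  exact Finsupp.sum_congr fun m _ => by rw [MM_comm]

/-- If same-colored variables are equal, every color-preserving permutation is trivial,
and every Laurent polynomial is symmetric. -/
lemma colorPres_eq_refl (hsub : ∀ v w : VarType ν, v.1 = w.1 → v = w)
    (g : Equiv.Perm (VarType ν)) (hg : ColorPres g) : g = Equiv.refl _ :=
  Equiv.ext fun v => hsub (g v) v (hg v)

lemma isSym_all (hsub : ∀ v w : VarType ν, v.1 = w.1 → v = w) (R : Laur F ν) : IsSym R := by
  intro g hg
  rw [colorPres_eq_refl hsub g hg]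
  exact rnm_refl R

end Toolkit



/-! ### The two same-colored variables of `sgm i + sgm i` -/

lemma sgm_add_self_apply (i : I) : (sgm i + sgm i) i = 2 := by
  show sgm i i + sgm i i = 2
  simp [sgm]

def v20 (i : I) : VarType (sgm i + sgm i) :=
  ⟨i, ⟨0, by rw [sgm_add_self_apply]; omega⟩⟩

def v21 (i : I) : VarType (sgm i + sgm i) :=
  ⟨i, ⟨1, by rw [sgm_add_self_apply]; omega⟩⟩

lemma v20_ne_v21 (i : I) : v20 i ≠ v21 i := by
  intro h
  have := congrArg (fun v : VarType (sgm i + sgm i) => (v.2 : ℕ)) h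
  simp [v20, v21] at this

lemma mem2 {i : I} (v : VarType (sgm i + sgm i)) : v = v20 i ∨ v = v21 i := by
  obtain ⟨c, k⟩ := v
  have hc : c = i := by
    by_contra h
    have h0 : (sgm i + sgm i) c = 0 := by
      show sgm i c + sgm i c = 0
      simp [sgm, h]
    have := k.isLt
    omega
  subst hc
  have h2 : (k : ℕ) < 2 := by
    have h := k.isLt
    have e := sgm_add_self_apply c
    omega
  have : (k : ℕ) = 0 ∨ (k : ℕ) = 1 := by omega
  rcases this with h | h
  · exact Or.inl (congrArg (Sigma.mk c) (Fin.ext h))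
  · exact Or.inr (congrArg (Sigma.mk c) (Fin.ext h))

lemma colorPres2 {i : I} (g : Equiv.Perm (VarType (sgm i + sgm i))) :
    g = Equiv.refl _ ∨ g = Equiv.swap (v20 i) (v21 i) := by
  rcases mem2 (g (v20 i)) with h0 | h0
  · left
    refine Equiv.ext fun v => ?_
    rcases mem2 (g (v21 i)) with h1 | h1
    · exact absurd (g.injective (h0.trans h1.symm)) (v20_ne_v21 i)
    · rcases mem2 v with rfl | rfl
      · simpa using h0
      · simpa using h1
  · right
    refine Equiv.ext fun v => ?_
    rcases mem2 (g (v21 i)) with h1 | h1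
    · rcases mem2 v with rfl | rfl
      · rw [h0, Equiv.swap_apply_left]
      · rw [h1, Equiv.swap_apply_right]
    · exact absurd (g.injective (h0.trans h1.symm)) (v20_ne_v21 i)

/-! ### The divided-difference polynomials `gp` -/

/-- `(x₀^B x₁^A - x₀^A x₁^B)/(x₀ - x₁)` as an explicit Laurent polynomial -/
def gp (i : I) (A B : ℤ) : Laur F (sgm i + sgm i) :=
  (if A ≤ B then (1 : F) else -1) •
    ∑ u ∈ Finset.Ico (min A B) (max A B), MM (v20 i) (v21 i) u (A + B - 1 - u)

lemma tele {ν : I → ℕ} (f : ℤ → Laur F ν) :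
    ∀ (n : ℕ) (A : ℤ), ∑ u ∈ Finset.Ico A (A + (n : ℤ)), (f (u + 1) - f u) = f (A + n) - f A := by
  intro n
  induction n with
  | zero => intro A; simp
  | succ n ih =>
    intro A
    have hs : Finset.Ico A (A + ((n : ℤ) + 1)) = insert (A + n) (Finset.Ico A (A + (n : ℤ))) := by
      ext u; simp only [Finset.mem_Ico, Finset.mem_insert]; omega
    push_cast
    rw [hs, Finset.sum_insert (by simp [Finset.mem_Ico]), ih A]
    abel

lemma gp_tele {ν : I → ℕ} (x y : VarType ν) (C D S : ℤ) (h : C ≤ D) :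
    ((MM x y 1 0 : Laur F ν) - MM x y 0 1) * ∑ u ∈ Finset.Ico C D, MM x y u (S - 1 - u)
      = MM x y D (S - D) - MM x y C (S - C) := by
  rw [Finset.mul_sum]
  have hterm : ∀ u : ℤ, ((MM x y 1 0 : Laur F ν) - MM x y 0 1) * MM x y u (S - 1 - u)
      = MM x y (u + 1) (S - (u + 1)) - MM x y u (S - u) := by
    intro u
    rw [sub_mul, MM_mul, MM_mul]
    rw [show (1 : ℤ) + u = u + 1 by ring, show (0 : ℤ) + (S - 1 - u) = S - (u + 1) by ring,
      show (0 : ℤ) + u = u by ring, show (1 : ℤ) + (S - 1 - u) = S - u by ring]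
  obtain ⟨n, hn⟩ : ∃ n : ℕ, D = C + (n : ℤ) := ⟨(D - C).toNat, by omega⟩
  subst hn
  calc ∑ u ∈ Finset.Ico C (C + (n : ℤ)), ((MM x y 1 0 : Laur F ν) - MM x y 0 1) * MM x y u (S - 1 - u)
      = ∑ u ∈ Finset.Ico C (C + (n : ℤ)),
          ((fun w => MM x y w (S - w)) (u + 1) - (fun w => MM x y w (S - w)) u) := by
        exact Finset.sum_congr rfl fun u _ => hterm u
    _ = MM x y (C + n) (S - (C + n)) - MM x y C (S - C) := tele _ n C

lemma gp_key (i : I) (A B : ℤ) :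
    ((MM (v20 i) (v21 i) 1 0 : Laur F (sgm i + sgm i)) - MM (v20 i) (v21 i) 0 1) * gp i A B
      = MM (v20 i) (v21 i) B A - MM (v20 i) (v21 i) A B := by
  unfold gp
  rcases le_or_gt A B with h | h
  · rw [if_pos h, one_smul, min_eq_left h, max_eq_right h,
      gp_tele (v20 i) (v21 i) A B (A + B) h,
      show A + B - B = A by ring, show A + B - A = B by ring]
  · rw [if_neg (not_le.2 h), neg_smul, one_smul, mul_neg,
      min_eq_right h.le, max_eq_left h.le,
      gp_tele (v20 i) (v21 i) B A (A + B) h.le,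
      show A + B - B = A by ring, show A + B - A = B by ring]
    abel

lemma gp_neg (i : I) (A B : ℤ) : (gp i A B : Laur F (sgm i + sgm i)) = - gp i B A := by
  unfold gp
  rw [min_comm B A, max_comm B A, show B + A - 1 = A + B - 1 by ring]
  rcases lt_trichotomy A B with h | h | h
  · rw [if_pos h.le, if_neg (not_le.2 h)]
    simp
  · subst h
    rw [if_pos le_rfl, min_self, max_self, Finset.Ico_self, Finset.sum_empty]
    simp
  · rw [if_neg (not_le.2 h), if_pos h.le]
    simp

lemma rnm_swap_MM (i : I) (u v : ℤ) :
    rnm (Equiv.swap (v20 i) (v21 i)) (MM (v20 i) (v21 i) u v : Laur F (sgm i + sgm i))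
      = MM (v20 i) (v21 i) v u := by
  unfold MM
  rw [rnm_single]
  congr 1
  rw [Finsupp.equivMapDomain_eq_mapDomain, Finsupp.mapDomain_add, Finsupp.mapDomain_single,
    Finsupp.mapDomain_single, Equiv.swap_apply_left, Equiv.swap_apply_right]
  exact add_comm _ _

lemma rnm_finset_sum {ν : I → ℕ} (g : VarType ν ≃ VarType ν) {α : Type} (s : Finset α)
    (f : α → Laur F ν) : rnm g (∑ a ∈ s, f a) = ∑ a ∈ s, rnm g (f a) := by
  rw [rnm_eq, map_sum]
  exact Finset.sum_congr rfl fun a _ => (rnm_eq g _).symm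

lemma gp_swap (i : I) (A B : ℤ) :
    rnm (Equiv.swap (v20 i) (v21 i)) (gp i A B : Laur F (sgm i + sgm i)) = gp i A B := by
  unfold gp
  rw [rnm_smul, rnm_finset_sum]
  congr 1
  have hmm : min A B + max A B = A + B := min_add_max A B
  refine Finset.sum_nbij' (fun u => A + B - 1 - u) (fun u => A + B - 1 - u) ?_ ?_ ?_ ?_ ?_
  · intro u hu; simp only [Finset.mem_Ico] at hu ⊢; omega
  · intro u hu; simp only [Finset.mem_Ico] at hu ⊢; omega
  · intro u _; ring
  · intro u _; ring
  · intro u _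
    rw [rnm_swap_MM, show A + B - 1 - (A + B - 1 - u) = u by ring]

/-! ### The polynomial `Pii a b` realizing `z^a * z^b` (same color) -/

def Pii (src tgt : E → I) (q : F) (t : E → F) (i : I) (a b : ℤ) : Laur F (sgm i + sgm i) :=
  Finsupp.sum (AddMonoidAlgebra.coeff (zetaT src tgt q t i i)) fun k c => c • gp i (a + k) (b + 1 - k)

lemma Pii_sym (src tgt : E → I) (q : F) (t : E → F) (i : I) (a b : ℤ) :
    IsSym (Pii src tgt q t i a b : Laur F (sgm i + sgm i)) := by
  intro g hg
  rcases colorPres2 g with rfl | rfl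
  · exact rnm_refl _
  · unfold Pii
    rw [rnm_finsupp_sum]
    refine Finsupp.sum_congr fun k _ => ?_
    rw [rnm_smul, gp_swap]

lemma Pii_core (src tgt : E → I) (q : F) (t : E → F) (i : I) (a b : ℤ) :
    ((MM (v20 i) (v21 i) 1 0 : Laur F (sgm i + sgm i)) - MM (v20 i) (v21 i) 0 1)
        * Pii src tgt q t i a b
      = MM (v20 i) (v21 i) (b + 1) a * compL (zetaT src tgt q t i i) (ratio (v21 i) (v20 i))
        - MM (v20 i) (v21 i) a (b + 1) * compL (zetaT src tgt q t i i) (ratio (v20 i) (v21 i)) := by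
  rw [MM_mul_compL', MM_mul_compL, ← Finsupp.sum_sub]
  unfold Pii
  rw [Finsupp.mul_sum]
  refine Finsupp.sum_congr fun k _ => ?_
  rw [mul_smul_comm, gp_key, smul_sub]

/-! ### Computing the ingredients of `ShuffleEq` for one-variable factors -/

instance instUniqueVarSgm (i : I) : Unique (VarType (sgm i)) where
  default := ⟨i, ⟨0, by simp [sgm]⟩⟩
  uniq v := varSubsingleton v _

instance instUniqueProd' {A B : Type} [Unique A] [Unique B] : Unique (A × B) where
  default := (default, default)
  uniq p := Prod.ext (Unique.uniq _ p.1) (Unique.uniq _ p.2)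

lemma fact_sgm (i j : I) :
    (∏ c : I, Nat.factorial (sgm i c) * Nat.factorial (sgm j c)) = 1 := by
  refine Finset.prod_eq_one fun c _ => ?_
  unfold sgm
  split <;> split <;> rfl

lemma smul_fact_sgm {M : Type} [AddCommMonoid M] [Module F M] (i j : I) (x : M) :
    ((∏ c : I, Nat.factorial (sgm i c) * Nat.factorial (sgm j c) : ℕ) : F) • x = x := by
  rw [fact_sgm, Nat.cast_one, one_smul]

lemma oneVarM_eq (i : I) (d : ℤ) :
    (oneVarM F i d : Laur F (sgm i)) =
      AddMonoidAlgebra.single (Finsupp.single (default : VarType (sgm i)) d) 1 := by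
  unfold oneVarM
  congr 1

/-! #### mixed colors -/

section Mixed

variable {i j : I} (hij : i ≠ j)

lemma sgm_add_le_one (hij : i ≠ j) (c : I) : (sgm i + sgm j) c ≤ 1 := by
  show sgm i c + sgm j c ≤ 1
  unfold sgm
  split_ifs with h1 h2
  · exact absurd (h1.symm.trans h2) hij
  all_goals omega

lemma subsing_mixed (hij : i ≠ j) (v w : VarType (sgm i + sgm j)) (h : v.1 = w.1) : v = w := by
  obtain ⟨c, k⟩ := v
  obtain ⟨c', k'⟩ := w
  cases h
  have h1 := k.isLt
  have h2 := k'.isLt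
  have := sgm_add_le_one hij c
  exact congrArg (Sigma.mk c) (Fin.ext (by omega))

def vI (hij : i ≠ j) : VarType (sgm i + sgm j) :=
  ⟨i, ⟨0, by simp [sgm]⟩⟩

def vJ (hij : i ≠ j) : VarType (sgm i + sgm j) :=
  ⟨j, ⟨0, by simp [sgm]⟩⟩

lemma incl1_mixed (hij : i ≠ j) (v : VarType (sgm i)) :
    incl1 (sgm i) (sgm j) v = vI hij := by
  rw [Unique.eq_default v]
  exact congrArg (Sigma.mk i) (Fin.ext rfl)

lemma incl2_mixed (hij : i ≠ j) (v : VarType (sgm j)) :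
    incl2 (sgm i) (sgm j) v = vJ hij := by
  rw [Unique.eq_default v]
  refine congrArg (Sigma.mk j) (Fin.ext ?_)
  show sgm i j + 0 = 0
  simp [sgm, Ne.symm hij]

lemma dsym_mixed (hij : i ≠ j) : (Dsym F (sgm i + sgm j) : Laur F (sgm i + sgm j)) = 1 := by
  unfold Dsym
  rw [Finset.filter_eq_empty_iff.2, Finset.prod_empty]
  rintro p -
  rw [not_and]
  intro hne hcol
  exact hne (subsing_mixed hij _ _ hcol)

lemma kpoly_mixed (src tgt : E → I) (q : F) (t : E → F) (hij : i ≠ j) :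
    Kpoly src tgt q t (sgm i) (sgm j)
      = compL (zetaT src tgt q t i j) (ratio (vI hij) (vJ hij)) := by
  unfold Kpoly
  rw [Fintype.prod_unique]
  have hemp1 : ((Finset.univ : Finset (VarType (sgm i) × VarType (sgm i))).filter
      (fun p => p.1 ≠ p.2 ∧ p.1.1 = p.2.1)) = ∅ := by
    refine Finset.filter_eq_empty_iff.2 ?_
    rintro p -
    rw [not_and]
    intro hne _
    exact hne (varSubsingleton _ _)
  have hemp2 : ((Finset.univ : Finset (VarType (sgm j) × VarType (sgm j))).filter
      (fun p => p.1 ≠ p.2 ∧ p.1.1 = p.2.1)) = ∅ := by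
    refine Finset.filter_eq_empty_iff.2 ?_
    rintro p -
    rw [not_and]
    intro hne _
    exact hne (varSubsingleton _ _)
  rw [hemp1, hemp2, Finset.prod_empty, Finset.prod_empty, mul_one, mul_one]
  rw [if_neg (show ¬ (default : VarType (sgm i) × VarType (sgm j)).1.1 =
      (default : VarType (sgm i) × VarType (sgm j)).2.1 from hij), mul_one,
    incl1_mixed hij, incl2_mixed hij]
  rfl

lemma embed1_mixed (d : ℤ) (hij : i ≠ j) :
    embed1 (sgm i) (sgm j) (oneVarM F i d) =
      AddMonoidAlgebra.single (Finsupp.single (vI hij) d) 1 := by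
  unfold embed1
  rw [oneVarM_eq, AddMonoidAlgebra.mapDomain_single, Finsupp.mapDomain_single, incl1_mixed hij]

lemma embed2_mixed (d : ℤ) (hij : i ≠ j) :
    embed2 (sgm i) (sgm j) (oneVarM F j d) =
      AddMonoidAlgebra.single (Finsupp.single (vJ hij) d) 1 := by
  unfold embed2
  rw [oneVarM_eq, AddMonoidAlgebra.mapDomain_single, Finsupp.mapDomain_single, incl2_mixed hij]

/-- `mixP i j a b`: the shuffle product `z_i^a * z_j^b` for `i ≠ j`, in any grading with
one variable of color `i` and one of color `j`. -/
def mixP (src tgt : E → I) (q : F) (t : E → F) (i j : I) (a b : ℤ) (ν : I → ℕ)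
    (hi : 0 < ν i) (hj : 0 < ν j) : Laur F ν :=
  Finsupp.sum (AddMonoidAlgebra.coeff (zetaT src tgt q t i j)) fun k c =>
    c • MM (⟨i, ⟨0, hi⟩⟩ : VarType ν) (⟨j, ⟨0, hj⟩⟩ : VarType ν) (a + k) (b - k)

lemma vI_eq (hij : i ≠ j) : vI hij = (⟨i, ⟨0, by simp [sgm]⟩⟩ : VarType (sgm i + sgm j)) := rfl
lemma vJ_eq (hij : i ≠ j) : vJ hij = (⟨j, ⟨0, by simp [sgm, Ne.symm hij]⟩⟩ :
    VarType (sgm i + sgm j)) := rfl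

lemma shuffleEq_mixed (src tgt : E → I) (q : F) (t : E → F) (hij : i ≠ j) (a b : ℤ) :
    ShuffleEq src tgt q t (oneVarM F i a) (oneVarM F j b)
      (mixP src tgt q t i j a b (sgm i + sgm j)
        (by simp [sgm]) (by simp [sgm, Ne.symm hij])) := by
  unfold ShuffleEq
  rw [smul_fact_sgm, dsym_mixed hij, one_mul]
  letI : Unique {g : Equiv.Perm (VarType (sgm i + sgm j)) // ColorPres g} :=
    ⟨⟨⟨Equiv.refl _, fun _ => rfl⟩⟩,
      fun g => Subtype.ext (colorPres_eq_refl (subsing_mixed hij) g.1 g.2)⟩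
  rw [Fintype.sum_unique]
  have hd : (default : {g : Equiv.Perm (VarType (sgm i + sgm j)) // ColorPres g}).1
      = Equiv.refl (VarType (sgm i + sgm j)) := rfl
  rw [hd, rnm_refl, kpoly_mixed src tgt q t hij, embed1_mixed a hij, embed2_mixed b hij]
  have hMM : (AddMonoidAlgebra.single (Finsupp.single (vI hij) a) 1 : Laur F (sgm i + sgm j))
      * AddMonoidAlgebra.single (Finsupp.single (vJ hij) b) 1 = MM (vI hij) (vJ hij) a b := by
    unfold MM
    rw [AddMonoidAlgebra.single_mul_single, one_mul]
  rw [hMM, MM_mul_compL]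
  rfl

end Mixed

/-! #### equal colors -/

section Same

variable (i : I)

lemma dsym_same :
    (Dsym F (sgm i + sgm i) : Laur F (sgm i + sgm i))
      = (XV (v20 i) - XV (v21 i)) * (XV (v21 i) - XV (v20 i)) := by
  unfold Dsym
  have hset : ((Finset.univ : Finset (VarType (sgm i + sgm i) × VarType (sgm i + sgm i))).filter
      (fun p => p.1 ≠ p.2 ∧ p.1.1 = p.2.1))
        = {(v20 i, v21 i), (v21 i, v20 i)} := by
    ext p
    obtain ⟨p1, p2⟩ := p
    simp only [Finset.mem_filter, Finset.mem_univ, true_and, Finset.mem_insert,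
      Finset.mem_singleton, Prod.mk.injEq]
    constructor
    · rintro ⟨hne, hcol⟩
      rcases mem2 p1 with rfl | rfl <;> rcases mem2 p2 with rfl | rfl
      · exact absurd rfl hne
      · exact Or.inl ⟨rfl, rfl⟩
      · exact Or.inr ⟨rfl, rfl⟩
      · exact absurd rfl hne
    · rintro (⟨rfl, rfl⟩ | ⟨rfl, rfl⟩)
      · exact ⟨v20_ne_v21 i, rfl⟩
      · exact ⟨(v20_ne_v21 i).symm, rfl⟩
  rw [hset, Finset.prod_insert (by
    simp only [Finset.mem_singleton, Prod.mk.injEq]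
    rintro ⟨h, -⟩
    exact v20_ne_v21 i h), Finset.prod_singleton]

lemma incl1_same (v : VarType (sgm i)) : incl1 (sgm i) (sgm i) v = v20 i := by
  rw [Unique.eq_default v]
  exact congrArg (Sigma.mk i) (Fin.ext rfl)

lemma incl2_same (v : VarType (sgm i)) : incl2 (sgm i) (sgm i) v = v21 i := by
  rw [Unique.eq_default v]
  refine congrArg (Sigma.mk i) (Fin.ext ?_)
  show sgm i i + 0 = 1
  simp [sgm]

lemma kpoly_same (src tgt : E → I) (q : F) (t : E → F) :
    Kpoly src tgt q t (sgm i) (sgm i)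
      = compL (zetaT src tgt q t i i) (ratio (v20 i) (v21 i))
          * ((XV (v20 i) - XV (v21 i)) * XV (v21 i)) := by
  unfold Kpoly
  rw [Fintype.prod_unique]
  have hemp1 : ((Finset.univ : Finset (VarType (sgm i) × VarType (sgm i))).filter
      (fun p => p.1 ≠ p.2 ∧ p.1.1 = p.2.1)) = ∅ := by
    refine Finset.filter_eq_empty_iff.2 ?_
    rintro p -
    rw [not_and]
    intro hne _
    exact hne (varSubsingleton _ _)
  rw [hemp1]
  rw [Finset.prod_empty, Finset.prod_empty, mul_one, mul_one, if_pos (show ((default : VarType (sgm i) × VarType (sgm i)).1.1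
      = (default : VarType (sgm i) × VarType (sgm i)).2.1) from rfl),
    incl1_same, incl2_same]
  rfl

lemma embed1_same (d : ℤ) :
    embed1 (sgm i) (sgm i) (oneVarM F i d) =
      AddMonoidAlgebra.single (Finsupp.single (v20 i) d) 1 := by
  unfold embed1
  rw [oneVarM_eq, AddMonoidAlgebra.mapDomain_single, Finsupp.mapDomain_single, incl1_same]

lemma embed2_same (d : ℤ) :
    embed2 (sgm i) (sgm i) (oneVarM F i d) =
      AddMonoidAlgebra.single (Finsupp.single (v21 i) d) 1 := by
  unfold embed2
  rw [oneVarM_eq, AddMonoidAlgebra.mapDomain_single, Finsupp.mapDomain_single, incl2_same]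

lemma colorPres_swap : ColorPres (Equiv.swap (v20 i) (v21 i)) := by
  intro v
  rcases mem2 v with rfl | rfl
  · rw [Equiv.swap_apply_left]; rfl
  · rw [Equiv.swap_apply_right]; rfl

lemma sum_colorPres_same (X : Laur F (sgm i + sgm i)) :
    ∑ g : {g : Equiv.Perm (VarType (sgm i + sgm i)) // ColorPres g}, rnm g.1 X
      = rnm (Equiv.refl _) X + rnm (Equiv.swap (v20 i) (v21 i)) X := by
  have hne : (⟨Equiv.refl _, fun _ => rfl⟩ :
      {g : Equiv.Perm (VarType (sgm i + sgm i)) // ColorPres g})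
      ≠ ⟨Equiv.swap (v20 i) (v21 i), colorPres_swap i⟩ := by
    intro h
    have h2 := congrArg (fun g => g.1 (v20 i)) h
    simp only [Equiv.refl_apply, Equiv.swap_apply_left] at h2
    exact v20_ne_v21 i h2
  have huniv : (Finset.univ : Finset {g : Equiv.Perm (VarType (sgm i + sgm i)) // ColorPres g})
      = {⟨Equiv.refl _, fun _ => rfl⟩, ⟨Equiv.swap (v20 i) (v21 i), colorPres_swap i⟩} := by
    ext g
    simp only [Finset.mem_univ, Finset.mem_insert, Finset.mem_singleton, true_iff]
    rcases colorPres2 g.1 with h | h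
    · exact Or.inl (Subtype.ext h)
    · exact Or.inr (Subtype.ext h)
  rw [huniv, Finset.sum_pair hne]

lemma shuffleEq_same (src tgt : E → I) (q : F) (t : E → F) (a b : ℤ) :
    ShuffleEq src tgt q t (oneVarM F i a) (oneVarM F i b) (Pii src tgt q t i a b) := by
  unfold ShuffleEq
  rw [smul_fact_sgm, dsym_same, sum_colorPres_same, rnm_refl,
    kpoly_same, embed1_same, embed2_same]
  have hMM : (AddMonoidAlgebra.single (Finsupp.single (v20 i) a) 1 : Laur F (sgm i + sgm i))
      * AddMonoidAlgebra.single (Finsupp.single (v21 i) b) 1 = MM (v20 i) (v21 i) a b := by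
    unfold MM
    rw [AddMonoidAlgebra.single_mul_single, one_mul]
  rw [hMM, XV_eq_MM (v20 i) (v21 i), XV_eq_MM' (v20 i) (v21 i)]
  -- compute the swapped term
  rw [rnm_mul, rnm_mul, rnm_mul, rnm_sub, rnm_swap_MM, rnm_swap_MM, rnm_swap_MM,
    rnm_compL]
  have hratio : Finsupp.equivMapDomain (Equiv.swap (v20 i) (v21 i)) (ratio (v20 i) (v21 i))
      = ratio (v21 i) (v20 i) := by
    unfold ratio
    rw [Finsupp.equivMapDomain_eq_mapDomain]
    have hsub : Finsupp.mapDomain (⇑(Equiv.swap (v20 i) (v21 i)))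
          ((Finsupp.single (v20 i) (1 : ℤ)) - Finsupp.single (v21 i) 1)
        = Finsupp.mapDomain (⇑(Equiv.swap (v20 i) (v21 i))) (Finsupp.single (v20 i) (1 : ℤ))
          - Finsupp.mapDomain (⇑(Equiv.swap (v20 i) (v21 i))) (Finsupp.single (v21 i) (1 : ℤ)) :=
      map_sub (Finsupp.mapDomain.addMonoidHom (M := ℤ) (⇑(Equiv.swap (v20 i) (v21 i)))) _ _
    rw [hsub, Finsupp.mapDomain_single, Finsupp.mapDomain_single, Equiv.swap_apply_left,
      Equiv.swap_apply_right]
  rw [hratio]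
  -- now a pure (commutative) ring identity via Pii_core
  have hcore := Pii_core src tgt q t i a b
  have h1 : (MM (v20 i) (v21 i) a b : Laur F (sgm i + sgm i)) * MM (v20 i) (v21 i) 0 1
      = MM (v20 i) (v21 i) a (b + 1) := by
    rw [MM_mul, add_zero]
  have h2 : (MM (v20 i) (v21 i) b a : Laur F (sgm i + sgm i)) * MM (v20 i) (v21 i) 1 0
      = MM (v20 i) (v21 i) (b + 1) a := by
    rw [MM_mul, add_zero, add_comm b 1]
  linear_combination (MM (v20 i) (v21 i) 0 1 - MM (v20 i) (v21 i) 1 0) * hcore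
    + (MM (v20 i) (v21 i) 0 1 - MM (v20 i) (v21 i) 1 0)
      * compL (zetaT src tgt q t i i) (ratio (v20 i) (v21 i)) * h1
    - (MM (v20 i) (v21 i) 0 1 - MM (v20 i) (v21 i) 1 0)
      * compL (zetaT src tgt q t i i) (ratio (v21 i) (v20 i)) * h2

end Same

/-! ### The summation identities -/

lemma key_same (src tgt : E → I) (q : F) (t : E → F) (i : I) (a b : ℤ) :
    Finsupp.sum (AddMonoidAlgebra.coeff (zetaT src tgt q t i i))
        (fun m c => c • (Pii src tgt q t i (a + 1 - m) (b + m) : Laur F (sgm i + sgm i)))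
      = (-1 : F) • Finsupp.sum (AddMonoidAlgebra.coeff (zetaT src tgt q t i i))
          (fun m c => c • Pii src tgt q t i (b + 1 - m) (a + m)) := by
  set Z := AddMonoidAlgebra.coeff (zetaT src tgt q t i i) with hZ
  unfold Pii
  rw [Finsupp.smul_sum]
  calc Finsupp.sum Z (fun m cm => cm • Finsupp.sum Z fun k ck =>
          ck • (gp i (a + 1 - m + k) (b + m + 1 - k) : Laur F (sgm i + sgm i)))
      = Finsupp.sum Z (fun m cm => Finsupp.sum Z fun k ck =>
          cm • ck • (gp i (a + 1 - m + k) (b + m + 1 - k) : Laur F (sgm i + sgm i))) := by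
        exact Finsupp.sum_congr fun m _ => Finsupp.smul_sum
    _ = Finsupp.sum Z (fun k ck => Finsupp.sum Z fun m cm =>
          cm • ck • (gp i (a + 1 - m + k) (b + m + 1 - k) : Laur F (sgm i + sgm i))) :=
        Finsupp.sum_comm _ _ _
    _ = Finsupp.sum Z fun m cm => (-1 : F) • cm • Finsupp.sum Z fun k ck =>
          ck • (gp i (b + 1 - m + k) (a + m + 1 - k) : Laur F (sgm i + sgm i)) := by
        refine Finsupp.sum_congr fun m _ => ?_
        rw [Finsupp.smul_sum, Finsupp.smul_sum]
        refine Finsupp.sum_congr fun k _ => ?_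
        rw [gp_neg, show (b + 1 - m + k : ℤ) = b + k + 1 - m by ring,
          show (a + m + 1 - k : ℤ) = a + 1 - k + m by ring]
        module

lemma key_mixed (src tgt : E → I) (q : F) (t : E → F) (i j : I) (a b : ℤ)
    (ν : I → ℕ) (hi : 0 < ν i) (hj : 0 < ν j) :
    Finsupp.sum (AddMonoidAlgebra.coeff (zetaT src tgt q t j i))
        (fun m c => c • (mixP src tgt q t i j (a - m) (b + m) ν hi hj : Laur F ν))
      = Finsupp.sum (AddMonoidAlgebra.coeff (zetaT src tgt q t i j))
          (fun m c => c • mixP src tgt q t j i (b - m) (a + m) ν hj hi) := by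
  unfold mixP
  calc Finsupp.sum (AddMonoidAlgebra.coeff (zetaT src tgt q t j i)) (fun m cm => cm • Finsupp.sum (AddMonoidAlgebra.coeff (zetaT src tgt q t i j))
          fun k ck => ck • (MM (⟨i, ⟨0, hi⟩⟩ : VarType ν) ⟨j, ⟨0, hj⟩⟩ (a - m + k) (b + m - k) :
            Laur F ν))
      = Finsupp.sum (AddMonoidAlgebra.coeff (zetaT src tgt q t j i)) (fun m cm => Finsupp.sum (AddMonoidAlgebra.coeff (zetaT src tgt q t i j))
          fun k ck => cm • ck • (MM (⟨i, ⟨0, hi⟩⟩ : VarType ν) ⟨j, ⟨0, hj⟩⟩ (a - m + k)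
            (b + m - k) : Laur F ν)) :=
        Finsupp.sum_congr fun m _ => Finsupp.smul_sum
    _ = Finsupp.sum (AddMonoidAlgebra.coeff (zetaT src tgt q t i j)) (fun k ck => Finsupp.sum (AddMonoidAlgebra.coeff (zetaT src tgt q t j i))
          fun m cm => cm • ck • (MM (⟨i, ⟨0, hi⟩⟩ : VarType ν) ⟨j, ⟨0, hj⟩⟩ (a - m + k)
            (b + m - k) : Laur F ν)) := (Finsupp.sum_comm _ _ _).symm
    _ = _ := by
        refine Finsupp.sum_congr fun m _ => ?_
        rw [Finsupp.smul_sum]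
        refine Finsupp.sum_congr fun k _ => ?_
        rw [MM_comm (⟨j, ⟨0, hj⟩⟩ : VarType ν) ⟨i, ⟨0, hi⟩⟩,
          show (b - m + k : ℤ) = b + k - m by ring, show (a + m - k : ℤ) = a - k + m by ring]
        exact smul_comm _ _ _

lemma inclV_heq {ν₁ ν₂ : I → ℕ} (h : ν₁ = ν₂) (R₁ : SymSub F ν₁) (R₂ : SymSub F ν₂)
    (hval : HEq R₁.val R₂.val) : inclV ν₁ R₁ = inclV ν₂ R₂ := by
  subst h
  exact congrArg _ (Subtype.ext (eq_of_heq hval))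

lemma sgm_add_comm (i j : I) : sgm i + sgm j = sgm j + sgm i := by
  funext c
  exact add_comm _ _


lemma symsub_coe_sum {ν : I → ℕ} (Z : ℤ →₀ F) (f : ℤ → F → SymSub F ν) :
    ((Finsupp.sum Z f : SymSub F ν) : Laur F ν)
      = Finsupp.sum Z (fun m c => ((f m c : SymSub F ν) : Laur F ν)) := by
  rw [show ((Finsupp.sum Z f : SymSub F ν) : Laur F ν)
    = (SymSub F ν).subtype (Finsupp.sum Z f) from rfl, map_finsuppSum]
  rfl

lemma symsub_coe_sum_smul {ν : I → ℕ} (Z : ℤ →₀ F) (P : ℤ → Laur F ν)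
    (hP : ∀ m, IsSym (P m)) :
    ((Finsupp.sum Z (fun m c => c • (⟨P m, hP m⟩ : SymSub F ν)) : SymSub F ν) : Laur F ν)
      = Finsupp.sum Z (fun m c => c • P m) := by
  rw [symsub_coe_sum]
  exact Finsupp.sum_congr fun m _ => by rw [Submodule.coe_smul]

lemma inclV_heq' {ν₁ ν₂ : I → ℕ} (h : ν₁ = ν₂) (R₁ : SymSub F ν₁) (R₂ : SymSub F ν₂)
    (hval : HEq ((R₁ : SymSub F ν₁) : Laur F ν₁) ((R₂ : SymSub F ν₂) : Laur F ν₂)) :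
    inclV ν₁ R₁ = inclV ν₂ R₂ := by
  subst h
  exact congrArg _ (Subtype.ext (eq_of_heq hval))

section Main

variable (src tgt : E → I) (q : F) (t : E → F)
variable (V : Type) [Ring V] [Algebra F V] (ι : VV F I ≃ₗ[F] V)

lemma main_relation (hV : IsShuffleAlgebra src tgt q t V ι) (i j : I) (a b : ℤ) :
    Finsupp.sum (AddMonoidAlgebra.coeff (zetaT src tgt q t j i)) (fun m c =>
        c • (ι (inclV (sgm i) (oneVar F i (a + (dl i j : ℤ) - m)))
          * ι (inclV (sgm j) (oneVar F j (b + m)))))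
      = ((-1 : F) ^ dl i j) •
        Finsupp.sum (AddMonoidAlgebra.coeff (zetaT src tgt q t i j)) (fun m c =>
          c • (ι (inclV (sgm j) (oneVar F j (b + (dl i j : ℤ) - m)))
            * ι (inclV (sgm i) (oneVar F i (a + m))))) := by
  rcases eq_or_ne i j with rfl | hij
  · -- same color
    have hdl : dl i i = 1 := if_pos rfl
    simp only [hdl, Nat.cast_one, pow_one]
    set L : SymSub F (sgm i + sgm i) →ₗ[F] V :=
      ι.toLinearMap ∘ₗ inclV (sgm i + sgm i) with hL
    have hprod : ∀ u v : ℤ,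
        ι (inclV (sgm i) (oneVar F i u)) * ι (inclV (sgm i) (oneVar F i v))
          = L ⟨Pii src tgt q t i u v, Pii_sym src tgt q t i u v⟩ :=
      fun u v => hV.2 (sgm i) (sgm i) (oneVar F i u) (oneVar F i v)
        ⟨Pii src tgt q t i u v, Pii_sym src tgt q t i u v⟩ (shuffleEq_same i src tgt q t u v)
    have hLsum : ∀ (w : ℤ → ℤ) (w' : ℤ → ℤ),
        Finsupp.sum (AddMonoidAlgebra.coeff (zetaT src tgt q t i i)) (fun m c =>
            c • L ⟨Pii src tgt q t i (w m) (w' m), Pii_sym src tgt q t i (w m) (w' m)⟩)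
          = L (Finsupp.sum (AddMonoidAlgebra.coeff (zetaT src tgt q t i i)) (fun m c =>
              c • ⟨Pii src tgt q t i (w m) (w' m), Pii_sym src tgt q t i (w m) (w' m)⟩)) := by
      intro w w'
      rw [map_finsuppSum]
      exact Finsupp.sum_congr fun m _ => (L.map_smul _ _).symm
    calc Finsupp.sum (AddMonoidAlgebra.coeff (zetaT src tgt q t i i)) (fun m c =>
            c • (ι (inclV (sgm i) (oneVar F i (a + 1 - m)))
              * ι (inclV (sgm i) (oneVar F i (b + m)))))
        = Finsupp.sum (AddMonoidAlgebra.coeff (zetaT src tgt q t i i)) (fun m c =>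
            c • L ⟨Pii src tgt q t i (a + 1 - m) (b + m), Pii_sym src tgt q t i _ _⟩) :=
          Finsupp.sum_congr fun m _ => by rw [hprod]
      _ = L (Finsupp.sum (AddMonoidAlgebra.coeff (zetaT src tgt q t i i)) (fun m c =>
            c • ⟨Pii src tgt q t i (a + 1 - m) (b + m), Pii_sym src tgt q t i _ _⟩)) :=
          hLsum (fun m => a + 1 - m) (fun m => b + m)
      _ = L ((-1 : F) • Finsupp.sum (AddMonoidAlgebra.coeff (zetaT src tgt q t i i)) (fun m c =>
            c • ⟨Pii src tgt q t i (b + 1 - m) (a + m), Pii_sym src tgt q t i _ _⟩)) := by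
          congr 1
          refine Subtype.ext ?_
          show ((_ : SymSub F (sgm i + sgm i)) : Laur F (sgm i + sgm i)) = _
          rw [Submodule.coe_smul,
            symsub_coe_sum_smul (AddMonoidAlgebra.coeff (zetaT src tgt q t i i))
              (fun m => Pii src tgt q t i (a + 1 - m) (b + m))
              (fun m => Pii_sym src tgt q t i _ _),
            symsub_coe_sum_smul (AddMonoidAlgebra.coeff (zetaT src tgt q t i i))
              (fun m => Pii src tgt q t i (b + 1 - m) (a + m))
              (fun m => Pii_sym src tgt q t i _ _)]
          exact key_same src tgt q t i a b
      _ = (-1 : F) • Finsupp.sum (AddMonoidAlgebra.coeff (zetaT src tgt q t i i)) (fun m c =>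
            c • (ι (inclV (sgm i) (oneVar F i (b + 1 - m)))
              * ι (inclV (sgm i) (oneVar F i (a + m))))) := by
          rw [map_smul, ← hLsum (fun m => b + 1 - m) (fun m => a + m)]
          congr 1
          exact Finsupp.sum_congr fun m _ => by rw [hprod]
  · -- different colors
    have hji : j ≠ i := Ne.symm hij
    have hdl : dl i j = 0 := if_neg hij
    simp only [hdl, Nat.cast_zero, add_zero, pow_zero, one_smul]
    set L1 : SymSub F (sgm i + sgm j) →ₗ[F] V :=
      ι.toLinearMap ∘ₗ inclV (sgm i + sgm j) with hL1
    set L2 : SymSub F (sgm j + sgm i) →ₗ[F] V :=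
      ι.toLinearMap ∘ₗ inclV (sgm j + sgm i) with hL2
    have hi1 : 0 < (sgm i + sgm j) i := by simp [sgm]
    have hj1 : 0 < (sgm i + sgm j) j := by simp [sgm, hji]
    have hj2 : 0 < (sgm j + sgm i) j := by simp [sgm]
    have hi2 : 0 < (sgm j + sgm i) i := by simp [sgm, hij]
    have hsym1 : ∀ R : Laur F (sgm i + sgm j), IsSym R :=
      fun R => isSym_all (subsing_mixed hij) R
    have hsym2 : ∀ R : Laur F (sgm j + sgm i), IsSym R :=
      fun R => isSym_all (subsing_mixed hji) R
    have hprod1 : ∀ u v : ℤ,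
        ι (inclV (sgm i) (oneVar F i u)) * ι (inclV (sgm j) (oneVar F j v))
          = L1 ⟨mixP src tgt q t i j u v (sgm i + sgm j) hi1 hj1, hsym1 _⟩ :=
      fun u v => hV.2 (sgm i) (sgm j) (oneVar F i u) (oneVar F j v)
        ⟨mixP src tgt q t i j u v (sgm i + sgm j) hi1 hj1, hsym1 _⟩
        (shuffleEq_mixed src tgt q t hij u v)
    have hprod2 : ∀ u v : ℤ,
        ι (inclV (sgm j) (oneVar F j u)) * ι (inclV (sgm i) (oneVar F i v))
          = L2 ⟨mixP src tgt q t j i u v (sgm j + sgm i) hj2 hi2, hsym2 _⟩ :=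
      fun u v => hV.2 (sgm j) (sgm i) (oneVar F j u) (oneVar F i v)
        ⟨mixP src tgt q t j i u v (sgm j + sgm i) hj2 hi2, hsym2 _⟩
        (shuffleEq_mixed src tgt q t hji u v)
    have hheq : HEq
        (((Finsupp.sum (AddMonoidAlgebra.coeff (zetaT src tgt q t j i)) (fun m c =>
          c • (⟨mixP src tgt q t i j (a - m) (b + m) (sgm i + sgm j) hi1 hj1, hsym1 _⟩ :
            SymSub F (sgm i + sgm j)))) : SymSub F (sgm i + sgm j)) : Laur F (sgm i + sgm j))
        (((Finsupp.sum (AddMonoidAlgebra.coeff (zetaT src tgt q t i j)) (fun m c =>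
          c • (⟨mixP src tgt q t j i (b - m) (a + m) (sgm j + sgm i) hj2 hi2, hsym2 _⟩ :
            SymSub F (sgm j + sgm i)))) : SymSub F (sgm j + sgm i)) : Laur F (sgm j + sgm i))
        := by
      rw [symsub_coe_sum_smul (AddMonoidAlgebra.coeff (zetaT src tgt q t j i))
          (fun m => mixP src tgt q t i j (a - m) (b + m) (sgm i + sgm j) hi1 hj1)
          (fun m => hsym1 _),
        symsub_coe_sum_smul (AddMonoidAlgebra.coeff (zetaT src tgt q t i j))
          (fun m => mixP src tgt q t j i (b - m) (a + m) (sgm j + sgm i) hj2 hi2)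
          (fun m => hsym2 _)]
      have gen : ∀ (ν₁ ν₂ : I → ℕ) (hh : ν₁ = ν₂) (h1 : 0 < ν₁ i) (h2 : 0 < ν₁ j)
          (h3 : 0 < ν₂ j) (h4 : 0 < ν₂ i),
          HEq (Finsupp.sum (AddMonoidAlgebra.coeff (zetaT src tgt q t j i)) (fun m c =>
              c • (mixP src tgt q t i j (a - m) (b + m) ν₁ h1 h2 : Laur F ν₁)))
            (Finsupp.sum (AddMonoidAlgebra.coeff (zetaT src tgt q t i j)) (fun m c =>
              c • (mixP src tgt q t j i (b - m) (a + m) ν₂ h3 h4 : Laur F ν₂))) := by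
        rintro ν₁ ν₂ rfl h1 h2 h3 h4
        exact heq_of_eq (key_mixed src tgt q t i j a b ν₁ h1 h2)
      exact gen _ _ (sgm_add_comm i j) hi1 hj1 hj2 hi2
    calc Finsupp.sum (AddMonoidAlgebra.coeff (zetaT src tgt q t j i)) (fun m c =>
            c • (ι (inclV (sgm i) (oneVar F i (a - m)))
              * ι (inclV (sgm j) (oneVar F j (b + m)))))
        = Finsupp.sum (AddMonoidAlgebra.coeff (zetaT src tgt q t j i)) (fun m c =>
            c • L1 ⟨mixP src tgt q t i j (a - m) (b + m) (sgm i + sgm j) hi1 hj1, hsym1 _⟩) :=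
          Finsupp.sum_congr fun m _ => by rw [hprod1]
      _ = L1 (Finsupp.sum (AddMonoidAlgebra.coeff (zetaT src tgt q t j i)) (fun m c =>
            c • ⟨mixP src tgt q t i j (a - m) (b + m) (sgm i + sgm j) hi1 hj1, hsym1 _⟩)) := by
          rw [map_finsuppSum]
          exact Finsupp.sum_congr fun m _ => (L1.map_smul _ _).symm
      _ = L2 (Finsupp.sum (AddMonoidAlgebra.coeff (zetaT src tgt q t i j)) (fun m c =>
            c • ⟨mixP src tgt q t j i (b - m) (a + m) (sgm j + sgm i) hj2 hi2, hsym2 _⟩)) := by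
          rw [hL1, hL2]
          exact congrArg ι (inclV_heq' (sgm_add_comm i j) _ _ hheq)
      _ = Finsupp.sum (AddMonoidAlgebra.coeff (zetaT src tgt q t i j)) (fun m c =>
            c • L2 ⟨mixP src tgt q t j i (b - m) (a + m) (sgm j + sgm i) hj2 hi2, hsym2 _⟩) := by
          rw [map_finsuppSum]
          exact Finsupp.sum_congr fun m _ => L2.map_smul _ _
      _ = Finsupp.sum (AddMonoidAlgebra.coeff (zetaT src tgt q t i j)) (fun m c =>
            c • (ι (inclV (sgm j) (oneVar F j (b - m)))
              * ι (inclV (sgm i) (oneVar F i (a + m))))) :=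
          Finsupp.sum_congr fun m _ => by rw [hprod2]

end Main

end QShuffle
namespace QShuffle

/-- In the big shuffle algebra `𝒱` (any `𝔽`-algebra `(V, ι)` whose
multiplication is the shuffle product), the one-variable elements
`E_i(z) = ∑_d z_{i1}^d z^{-d}` satisfy coefficientwise the quadratic relation
`E_i(z) E_j(w) ζ̃_{ji}(w/z) z^{δ_{ij}} = E_j(w) E_i(z) ζ̃_{ij}(z/w) (-w)^{δ_{ij}}`;
consequently `e_{i,d} ↦ z_{i1}^d` induces an `𝔽`-algebra homomorphism `Υ̃ : Ũ⁺ → 𝒱`. -/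
theorem statement0 {I E : Type} [Fintype I] [Fintype E] [DecidableEq I] [DecidableEq E]
    (src tgt : E → I) (V : Type) [Ring V] [Algebra (FF E) V]
    (ι : VV (FF E) I ≃ₗ[FF E] V)
    (hV : IsShuffleAlgebra src tgt (qq E) tt V ι) :
    (∀ (i j : I) (a b : ℤ),
      Finsupp.sum (AddMonoidAlgebra.coeff (zetaT src tgt (qq E) tt j i)) (fun m c =>
          c • (ι (inclV (sgm i) (oneVar (FF E) i (a + (dl i j : ℤ) - m)))
            * ι (inclV (sgm j) (oneVar (FF E) j (b + m)))))
        = ((-1 : FF E) ^ dl i j) •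
          Finsupp.sum (AddMonoidAlgebra.coeff (zetaT src tgt (qq E) tt i j)) (fun m c =>
            c • (ι (inclV (sgm j) (oneVar (FF E) j (b + (dl i j : ℤ) - m)))
              * ι (inclV (sgm i) (oneVar (FF E) i (a + m))))))
    ∧ ∃ Φ : Utilde src tgt (qq E) tt →ₐ[FF E] V,
        ∀ (i : I) (d : ℤ),
          Φ (eU src tgt (qq E) tt i d) = ι (inclV (sgm i) (oneVar (FF E) i d)) := by
  have hpart1 := main_relation src tgt (qq E) tt V ι hV
  refine ⟨hpart1, ?_⟩
  set f : I × ℤ → V := fun p => ι (inclV (sgm p.1) (oneVar (FF E) p.1 p.2)) with hf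
  have hrel : ∀ ⦃x y : FreeAlgebra (FF E) (I × ℤ)⦄,
      QuadRel src tgt (qq E) tt x y →
        (FreeAlgebra.lift (FF E) f) x = (FreeAlgebra.lift (FF E) f) y := by
    intro x y h
    cases h with
    | rel i j a b =>
      unfold quadLHS quadRHS gen
      rw [map_finsuppSum, map_smul, map_finsuppSum]
      have hL : (Finsupp.sum (AddMonoidAlgebra.coeff (zetaT src tgt (qq E) tt j i)) fun m c =>
          (FreeAlgebra.lift (FF E) f)
            (c • (FreeAlgebra.ι (FF E) (i, a + (dl i j : ℤ) - m)
              * FreeAlgebra.ι (FF E) (j, b + m))))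
          = Finsupp.sum (AddMonoidAlgebra.coeff (zetaT src tgt (qq E) tt j i)) fun m c =>
              c • (ι (inclV (sgm i) (oneVar (FF E) i (a + (dl i j : ℤ) - m)))
                * ι (inclV (sgm j) (oneVar (FF E) j (b + m)))) := by
        refine Finsupp.sum_congr fun m _ => ?_
        rw [map_smul, map_mul, FreeAlgebra.lift_ι_apply, FreeAlgebra.lift_ι_apply]
      have hR : (Finsupp.sum (AddMonoidAlgebra.coeff (zetaT src tgt (qq E) tt i j)) fun m c =>
          (FreeAlgebra.lift (FF E) f)
            (c • (FreeAlgebra.ι (FF E) (j, b + (dl i j : ℤ) - m)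
              * FreeAlgebra.ι (FF E) (i, a + m))))
          = Finsupp.sum (AddMonoidAlgebra.coeff (zetaT src tgt (qq E) tt i j)) fun m c =>
              c • (ι (inclV (sgm j) (oneVar (FF E) j (b + (dl i j : ℤ) - m)))
                * ι (inclV (sgm i) (oneVar (FF E) i (a + m)))) := by
        refine Finsupp.sum_congr fun m _ => ?_
        rw [map_smul, map_mul, FreeAlgebra.lift_ι_apply, FreeAlgebra.lift_ι_apply]
      rw [hL, hR]
      exact hpart1 i j a b
  refine ⟨RingQuot.liftAlgHom (FF E) ⟨FreeAlgebra.lift (FF E) f, hrel⟩, ?_⟩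
  intro i d
  unfold eU
  rw [RingQuot.liftAlgHom_mkAlgHom_apply]
  unfold gen
  rw [FreeAlgebra.lift_ι_apply]

end QShuffle
end
end

section
/- Let A be any 𝔽₀-algebra containing elements e_{s,d} for s ∈ {i,j} and d ∈ ℤ whose generating series e_s(z) := Σ_d e_{s,d} z^{−d} satisfy, coefficientwise: (i) e_s(x)e_s(y)(xq−y) = e_s(y)e_s(x)(x−yq) for each s ∈ {i,j}; (ii) e_s(x)e_t(y)(x−yv) = e_t(y)e_s(x)(xv−y) for s ≠ t in {i,j}; and (iii) the cubic relation (x₁−yv)·e_i(x₁)e_i(x₂)e_j(y) + (x₂v−x₁v^{−1})·e_i(x₂)e_j(y)e_i(x₁) + (yv^{−1}−x₂)·e_j(y)e_i(x₁)e_i(x₂) = 0. Then the q-Serre relation holds coefficientwise: P(x₁,x₂,y) + P(x₂,x₁,y) = 0, where P(x₁,x₂,y) := e_i(x₁)e_i(x₂)e_j(y) − (v+v^{−1})·e_i(x₁)e_j(y)e_i(x₂) + e_j(y)e_i(x₁)e_i(x₂). -/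
noncomputable section

/-- `𝔽₀ = ℚ(v)` -/
abbrev F0 : Type := RatFunc ℚ

/-- the variable `v ∈ ℚ(v)` -/
def vv : F0 := RatFunc.X


private theorem serre_aux (K : Type) [Field K] (A : Type) [Ring A] [Algebra K A]
    (v : K) (hv : v ≠ 0) (hq : v ^ 2 - 1 ≠ 0) (ee : Bool → ℤ → A)
    (h1 : ∀ (s : Bool) (a b : ℤ),
      (v ^ 2) • (ee s (a + 1) * ee s b) - ee s a * ee s (b + 1)
        = ee s b * ee s (a + 1) - (v ^ 2) • (ee s (b + 1) * ee s a))
    (h2 : ∀ (s t : Bool), s ≠ t → ∀ (a b : ℤ),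
      ee s (a + 1) * ee t b - v • (ee s a * ee t (b + 1))
        = v • (ee t b * ee s (a + 1)) - ee t (b + 1) * ee s a)
    (h3 : ∀ (i j : Bool), i ≠ j → ∀ (a b c : ℤ),
      ee i (a + 1) * ee i b * ee j c - v • (ee i a * ee i b * ee j (c + 1))
        + v • (ee i (b + 1) * ee j c * ee i a) - v⁻¹ • (ee i b * ee j c * ee i (a + 1))
        + v⁻¹ • (ee j (c + 1) * ee i a * ee i b) - ee j c * ee i a * ee i (b + 1) = 0)
    (i j : Bool) (hij : i ≠ j) (a b c : ℤ) :
    (ee i a * ee i b * ee j c - (v + v⁻¹) • (ee i a * ee j c * ee i b)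
        + ee j c * ee i a * ee i b)
      + (ee i b * ee i a * ee j c - (v + v⁻¹) • (ee i b * ee j c * ee i a)
        + ee j c * ee i b * ee i a) = 0 := by
  have A1 : ∀ p q r : ℤ,
      (v ^ 2) • (ee i (p + 1) * ee i q * ee j r) - ee i p * ee i (q + 1) * ee j r
        = ee i q * ee i (p + 1) * ee j r - (v ^ 2) • (ee i (q + 1) * ee i p * ee j r) :=
    fun p q r => by
      simpa only [sub_mul, smul_mul_assoc] using congrArg (· * ee j r) (h1 i p q)
  have A2 : ∀ r p q : ℤ,
      (v ^ 2) • (ee j r * ee i (p + 1) * ee i q) - ee j r * ee i p * ee i (q + 1)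
        = ee j r * ee i q * ee i (p + 1) - (v ^ 2) • (ee j r * ee i (q + 1) * ee i p) :=
    fun r p q => by
      simpa only [mul_sub, mul_smul_comm, mul_assoc] using congrArg (ee j r * ·) (h1 i p q)
  have A3 : ∀ p q r : ℤ,
      ee i (p + 1) * ee j q * ee i r - v • (ee i p * ee j (q + 1) * ee i r)
        = v • (ee j q * ee i (p + 1) * ee i r) - ee j (q + 1) * ee i p * ee i r :=
    fun p q r => by
      simpa only [sub_mul, smul_mul_assoc] using congrArg (· * ee i r) (h2 i j hij p q)
  have A4 : ∀ r p q : ℤ,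
      ee i r * ee i (p + 1) * ee j q - v • (ee i r * ee i p * ee j (q + 1))
        = v • (ee i r * ee j q * ee i (p + 1)) - ee i r * ee j (q + 1) * ee i p :=
    fun r p q => by
      simpa only [mul_sub, mul_smul_comm, mul_assoc] using congrArg (ee i r * ·) (h2 i j hij p q)
  have ha : a - 1 + 1 = a := by ring
  have t1 := A1 (a - 1) b c
  have t2 := A2 c (a - 1) b
  have t3 := A3 (a - 1) c b
  have t4 := A3 b c (a - 1)
  have t5 := A4 b (a - 1) c
  have t6 := A4 (a - 1) b c
  have t7 := h3 i j hij (a - 1) b c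
  have t8 := h3 i j hij b (a - 1) c
  rw [ha] at t1 t2 t3 t5 t7 t8
  linear_combination (norm := match_scalars <;> first | ring1 | (field_simp; ring1) | field_simp)
    (v ^ 2 - 1)⁻¹ • t1 + (v ^ 2 - 1)⁻¹ • t2
      + ((v ^ 2 - 1)⁻¹ * v⁻¹) • t3 + ((v ^ 2 - 1)⁻¹ * v) • t4
      + ((v ^ 2 - 1)⁻¹ * v ^ 2) • t5 + (v ^ 2 - 1)⁻¹ • t6
      - (v ^ 2 - 1)⁻¹ • t7 - ((v ^ 2 - 1)⁻¹ * v ^ 2) • t8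

/-- Let `A` be any `ℚ(v)`-algebra with elements `e_{s,d}` (`s ∈ {i,j}`,
`d ∈ ℤ`) satisfying, coefficientwise: (i) `e_s(x)e_s(y)(xq - y) = e_s(y)e_s(x)(x - yq)`
with `q = v²`; (ii) `e_s(x)e_t(y)(x - yv) = e_t(y)e_s(x)(xv - y)` for `s ≠ t`; and (iii) the
cubic relation
`(x₁ - yv)·e_i(x₁)e_i(x₂)e_j(y) + (x₂v - x₁v⁻¹)·e_i(x₂)e_j(y)e_i(x₁)
  + (yv⁻¹ - x₂)·e_j(y)e_i(x₁)e_i(x₂) = 0`.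
Then the `q`-Serre relation `P(x₁,x₂,y) + P(x₂,x₁,y) = 0` holds coefficientwise, where
`P(x₁,x₂,y) = e_i(x₁)e_i(x₂)e_j(y) - (v + v⁻¹)·e_i(x₁)e_j(y)e_i(x₂)
  + e_j(y)e_i(x₁)e_i(x₂)`. -/
theorem statement16 (A : Type) [Ring A] [Algebra F0 A] (ee : Bool → ℤ → A)
    (h1 : ∀ (s : Bool) (a b : ℤ),
      (vv ^ 2) • (ee s (a + 1) * ee s b) - ee s a * ee s (b + 1)
        = ee s b * ee s (a + 1) - (vv ^ 2) • (ee s (b + 1) * ee s a))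
    (h2 : ∀ (s t : Bool), s ≠ t → ∀ (a b : ℤ),
      ee s (a + 1) * ee t b - vv • (ee s a * ee t (b + 1))
        = vv • (ee t b * ee s (a + 1)) - ee t (b + 1) * ee s a)
    (h3 : ∀ (i j : Bool), i ≠ j → ∀ (a b c : ℤ),
      ee i (a + 1) * ee i b * ee j c - vv • (ee i a * ee i b * ee j (c + 1))
        + vv • (ee i (b + 1) * ee j c * ee i a) - vv⁻¹ • (ee i b * ee j c * ee i (a + 1))
        + vv⁻¹ • (ee j (c + 1) * ee i a * ee i b) - ee j c * ee i a * ee i (b + 1) = 0)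
    (i j : Bool) (hij : i ≠ j) (a b c : ℤ) :
    (ee i a * ee i b * ee j c - (vv + vv⁻¹) • (ee i a * ee j c * ee i b)
        + ee j c * ee i a * ee i b)
      + (ee i b * ee i a * ee j c - (vv + vv⁻¹) • (ee i b * ee j c * ee i a)
        + ee j c * ee i b * ee i a) = 0 := by
  have hv : (vv : F0) ≠ 0 := RatFunc.X_ne_zero
  have hq : (vv ^ 2 - 1 : F0) ≠ 0 := by
    have he : (vv ^ 2 - 1 : F0)
        = algebraMap (Polynomial ℚ) F0 (Polynomial.X ^ 2 - 1) := by
      simp [vv, RatFunc.algebraMap_X]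
    rw [he]
    exact RatFunc.algebraMap_ne_zero (fun h' => by
      simpa using congrArg (Polynomial.eval 0) h')
  exact serre_aux F0 A vv hv hq ee h1 h2 h3 i j hij a b c

end
end
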